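/- arXiv:2604.08234 — 9 statements merged into one kernel-verified Lean document; each statement's English description precedes it below -/
import Mathlib

section
/- Let 𝓘 = (I_1,…,I_t) be a sequence of coloring channels over Σ = [q] that is separable with witnessing set ∅ ⊂ S ⊂ [t], and set 𝓘₁ = (I_i)_{i∈S}, 𝓘₂ = (I_i)_{i∉S}. Then cap(𝓘) = max{ cap(𝓘₁), cap(𝓘₂) }. -/
/-- The output of a single coloring channel `I`: the subsequence of `x`
consisting (in order) of the letters of `x` that belong to `I`. -/
def channelOutput {q : ℕ} (I : Finset (Fin q)) (x : List (Fin q)) : List (Fin q) :=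
  x.filter (fun a => a ∈ I)

/-- The set `A_𝓘(n)` of all tuples of channel outputs over inputs of length `n`. -/
def channelOutputs {q : ℕ} {ι : Type} (𝓘 : ι → Finset (Fin q)) (n : ℕ) :
    Set (ι → List (Fin q)) :=
  { y | ∃ x : List (Fin q), x.length = n ∧ y = fun i => channelOutput (𝓘 i) x }

/-- The capacity of a sequence of coloring channels:
`limsup_{n→∞} (1/n) log_q |A_𝓘(n)|`. -/
noncomputable def capacity {q : ℕ} {ι : Type} (𝓘 : ι → Finset (Fin q)) : ℝ :=
  Filter.atTop.limsup fun n : ℕ =>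
    Real.logb q ((channelOutputs 𝓘 n).ncard : ℝ) / (n : ℝ)

/-- The binary entropy function (with `H(0) = H(1) = 0`). -/
noncomputable def binH (x : ℝ) : ℝ :=
  -(x * Real.logb 2 x) - (1 - x) * Real.logb 2 (1 - x)

open Filter Real Set

private lemma list_ncard_length_eq (q n : ℕ) :
    {l : List (Fin q) | l.length = n}.ncard = q ^ n := by
  rw [← Nat.card_coe_set_eq]
  have e : {l : List (Fin q) | l.length = n} ≃ List.Vector (Fin q) n :=
    Equiv.subtypeEquivRight (fun _ => Iff.rfl)
  rw [Nat.card_congr e, Nat.card_eq_fintype_card, card_vector, Fintype.card_fin]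

private lemma channelOutputs_eq_image {q : ℕ} {ι : Type} (𝓘 : ι → Finset (Fin q)) (n : ℕ) :
    channelOutputs 𝓘 n
      = (fun x => fun i => channelOutput (𝓘 i) x) '' {x : List (Fin q) | x.length = n} := by
  ext y
  simp only [channelOutputs, Set.mem_image, Set.mem_setOf_eq]
  exact ⟨fun ⟨x, h1, h2⟩ => ⟨x, h1, h2.symm⟩, fun ⟨x, h1, h2⟩ => ⟨x, h1, h2.symm⟩⟩

private lemma channelOutputs_finite {q : ℕ} {ι : Type} (𝓘 : ι → Finset (Fin q)) (n : ℕ) :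
    (channelOutputs 𝓘 n).Finite := by
  rw [channelOutputs_eq_image]
  exact (List.finite_length_eq _ n).image _

private lemma channelOutputs_nonempty {q : ℕ} {ι : Type} (hq : q ≠ 0)
    (𝓘 : ι → Finset (Fin q)) (n : ℕ) : (channelOutputs 𝓘 n).Nonempty := by
  refine ⟨_, List.replicate n ⟨0, Nat.pos_of_ne_zero hq⟩, by simp, rfl⟩

private lemma channelOutputs_ncard_pos {q : ℕ} {ι : Type} (hq : q ≠ 0)
    (𝓘 : ι → Finset (Fin q)) (n : ℕ) : 0 < (channelOutputs 𝓘 n).ncard :=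
  (Set.ncard_pos (channelOutputs_finite 𝓘 n)).2 (channelOutputs_nonempty hq 𝓘 n)

private lemma channelOutputs_ncard_le {q : ℕ} {ι : Type} (𝓘 : ι → Finset (Fin q)) (n : ℕ) :
    (channelOutputs 𝓘 n).ncard ≤ q ^ n := by
  rw [channelOutputs_eq_image]
  calc _ ≤ {x : List (Fin q) | x.length = n}.ncard :=
        Set.ncard_image_le (List.finite_length_eq _ n)
    _ = q ^ n := list_ncard_length_eq q n

private lemma channelOutput_filter {q : ℕ} (I : Finset (Fin q)) (p : Fin q → Bool)
    (hp : ∀ a ∈ I, p a = true) (x : List (Fin q)) :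
    channelOutput I (x.filter p) = channelOutput I x := by
  unfold channelOutput
  rw [List.filter_filter]
  refine List.filter_congr fun a _ => ?_
  by_cases h : a ∈ I <;> simp [h, hp]

private lemma channelOutput_append_replicate {q : ℕ} (I : Finset (Fin q)) (x : List (Fin q))
    (m : ℕ) (b : Fin q) (hb : b ∉ I) :
    channelOutput I (x ++ List.replicate m b) = channelOutput I x := by
  unfold channelOutput
  rw [List.filter_append, List.filter_replicate_of_neg (by simpa using hb), List.append_nil]

private lemma channelOutputs_mono {q : ℕ} {ι : Type} (𝓘 : ι → Finset (Fin q))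
    (b : Fin q) (hb : ∀ i, b ∉ 𝓘 i) {k n : ℕ} (hkn : k ≤ n) :
    channelOutputs 𝓘 k ⊆ channelOutputs 𝓘 n := by
  rintro y ⟨x, hx, rfl⟩
  refine ⟨x ++ List.replicate (n - k) b, by simp [hx]; omega, ?_⟩
  funext i
  exact (channelOutput_append_replicate _ _ _ _ (hb i)).symm

private lemma ncard_biUnion_le' {α : Type*} (m : ℕ) (f : ℕ → Set α) :
    (⋃ k ∈ Finset.range m, f k).ncard ≤ ∑ k ∈ Finset.range m, (f k).ncard := by
  induction m with
  | zero => simp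
  | succ m ih =>
    rw [Finset.range_add_one, Finset.sum_insert (by simp)]
    have h : (⋃ k ∈ insert m (Finset.range m), f k) = f m ∪ ⋃ k ∈ Finset.range m, f k := by
      simp [Set.biUnion_insert]
    rw [h]
    exact (Set.ncard_union_le _ _).trans (by omega)

private lemma ncard_prod' {α β : Type*} (s : Set α) (t : Set β) :
    (s ×ˢ t).ncard = s.ncard * t.ncard := by
  rw [← Nat.card_coe_set_eq, ← Nat.card_coe_set_eq, ← Nat.card_coe_set_eq,
    Nat.card_congr (Equiv.Set.prod s t), Nat.card_prod]

private lemma count_split (q t : ℕ) (𝓘 : Fin t → Finset (Fin q)) (S : Finset (Fin t))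
    (hsep : (S.biUnion 𝓘) ∩ (Sᶜ.biUnion 𝓘) = ∅) (n : ℕ) :
    (channelOutputs 𝓘 n).ncard ≤
      ∑ k ∈ Finset.range (n + 1),
        (channelOutputs (fun i : {i // i ∈ S} => 𝓘 i.1) k).ncard *
          (channelOutputs (fun i : {i // i ∈ Sᶜ} => 𝓘 i.1) (n - k)).ncard := by
  classical
  set A₁ : ℕ → Set ({i // i ∈ S} → List (Fin q)) :=
    channelOutputs (fun i : {i // i ∈ S} => 𝓘 i.1) with hA₁
  set A₂ : ℕ → Set ({i // i ∈ Sᶜ} → List (Fin q)) :=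
    channelOutputs (fun i : {i // i ∈ Sᶜ} => 𝓘 i.1) with hA₂
  set Φ : (Fin t → List (Fin q)) →
      ({i // i ∈ S} → List (Fin q)) × ({i // i ∈ Sᶜ} → List (Fin q)) :=
    fun y => (fun i => y i.1, fun i => y i.1) with hΦ
  have hΦinj : Function.Injective Φ := by
    intro y z h
    funext i
    by_cases hi : i ∈ S
    · exact congrFun (congrArg Prod.fst h) ⟨i, hi⟩
    · exact congrFun (congrArg Prod.snd h) ⟨i, by simpa using hi⟩
  have hd : ∀ c : Fin q, c ∈ S.biUnion 𝓘 → c ∈ Sᶜ.biUnion 𝓘 → False := by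
    intro c h1 h2
    have := Finset.mem_inter.2 ⟨h1, h2⟩
    rw [hsep] at this
    simpa using this
  have hsub : channelOutputs 𝓘 n ⊆
      ⋃ k ∈ Finset.range (n + 1), Φ ⁻¹' (A₁ k ×ˢ A₂ (n - k)) := by
    rintro y ⟨x, hx, rfl⟩
    set p : Fin q → Bool := fun c => decide (c ∈ S.biUnion 𝓘) with hp
    have hkn : (x.filter p).length ≤ n := hx ▸ List.length_filter_le _ _
    have hlen := List.length_eq_length_filter_add (l := x) p
    refine Set.mem_iUnion₂.2 ⟨(x.filter p).length, Finset.mem_range.2 (by omega), ?_, ?_⟩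
    · refine ⟨x.filter p, rfl, ?_⟩
      funext i
      refine (channelOutput_filter _ p (fun c hc => ?_) x).symm
      simp only [hp, decide_eq_true_eq]
      exact Finset.mem_biUnion.2 ⟨i.1, i.2, hc⟩
    · refine ⟨x.filter (fun c => ! p c), by omega, ?_⟩
      funext i
      refine (channelOutput_filter _ _ (fun c hc => ?_) x).symm
      simp only [hp, Bool.not_eq_true', decide_eq_false_iff_not]
      exact fun hcU => hd c hcU (Finset.mem_biUnion.2 ⟨i.1, i.2, hc⟩)
  have hfinP : ∀ k, (A₁ k ×ˢ A₂ (n - k)).Finite :=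
    fun k => (channelOutputs_finite _ _).prod (channelOutputs_finite _ _)
  have hfinU : (⋃ k ∈ Finset.range (n + 1), Φ ⁻¹' (A₁ k ×ˢ A₂ (n - k))).Finite :=
    Set.Finite.biUnion (Finset.range (n + 1)).finite_toSet
      fun k _ => Set.Finite.preimage hΦinj.injOn (hfinP k)
  calc (channelOutputs 𝓘 n).ncard
      ≤ (⋃ k ∈ Finset.range (n + 1), Φ ⁻¹' (A₁ k ×ˢ A₂ (n - k))).ncard :=
        Set.ncard_le_ncard hsub hfinU
    _ ≤ ∑ k ∈ Finset.range (n + 1), (Φ ⁻¹' (A₁ k ×ˢ A₂ (n - k))).ncard :=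
        ncard_biUnion_le' _ _
    _ ≤ ∑ k ∈ Finset.range (n + 1), (A₁ k).ncard * (A₂ (n - k)).ncard := by
        refine Finset.sum_le_sum fun k _ => ?_
        rw [← ncard_prod']
        exact Set.ncard_le_ncard_of_injOn Φ (fun y hy => hy) hΦinj.injOn (hfinP k)

/-- the capacity of a separable sequence of coloring channels is the
maximum of the capacities of the two parts. -/
theorem capacity_of_separable (q t : ℕ) (hq : 2 ≤ q)
    (𝓘 : Fin t → Finset (Fin q)) (hne : ∀ i, (𝓘 i).Nonempty)
    (S : Finset (Fin t)) (hS : S.Nonempty) (hS' : S ≠ Finset.univ)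
    (hsep : (S.biUnion 𝓘) ∩ (Sᶜ.biUnion 𝓘) = ∅) :
    capacity 𝓘 =
      max (capacity fun i : {i // i ∈ S} => 𝓘 i.1)
          (capacity fun i : {i // i ∈ Sᶜ} => 𝓘 i.1) := by
  classical
  have hq0 : q ≠ 0 := by omega
  have hq1 : (1 : ℝ) < (q : ℝ) := by
    have : (2 : ℝ) ≤ (q : ℝ) := by exact_mod_cast hq
    linarith
  have hqpos : (0 : ℝ) < (q : ℝ) := by linarith
  have hqne1 : (q : ℝ) ≠ 1 := ne_of_gt hq1
  set 𝓙₁ : {i // i ∈ S} → Finset (Fin q) := fun i => 𝓘 i.1 with h𝓙₁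
  set 𝓙₂ : {i // i ∈ Sᶜ} → Finset (Fin q) := fun i => 𝓘 i.1 with h𝓙₂
  obtain ⟨i₁, hi₁⟩ := hS
  obtain ⟨i₂, hi₂⟩ : ∃ i, i ∈ Sᶜ := by
    by_contra h
    push_neg at h
    exact hS' (Finset.eq_univ_iff_forall.2 fun i => by
      by_contra hi
      exact h i (Finset.mem_compl.2 hi))
  obtain ⟨a, ha⟩ := hne i₁
  obtain ⟨b, hb⟩ := hne i₂
  have hd : ∀ c : Fin q, c ∈ S.biUnion 𝓘 → c ∈ Sᶜ.biUnion 𝓘 → False := by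
    intro c h1 h2
    have := Finset.mem_inter.2 ⟨h1, h2⟩
    rw [hsep] at this
    simp at this
  have hb1 : ∀ i : {i // i ∈ S}, b ∉ 𝓙₁ i := fun i hbi =>
    hd b (Finset.mem_biUnion.2 ⟨i.1, i.2, hbi⟩) (Finset.mem_biUnion.2 ⟨i₂, hi₂, hb⟩)
  have ha2 : ∀ i : {i // i ∈ Sᶜ}, a ∉ 𝓙₂ i := fun i hai =>
    hd a (Finset.mem_biUnion.2 ⟨i₁, hi₁, ha⟩) (Finset.mem_biUnion.2 ⟨i.1, i.2, hai⟩)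
  set f : ℕ → ℝ := fun n => Real.logb q ((channelOutputs 𝓘 n).ncard : ℝ) with hf
  set f₁ : ℕ → ℝ := fun n => Real.logb q ((channelOutputs 𝓙₁ n).ncard : ℝ) with hf₁
  set f₂ : ℕ → ℝ := fun n => Real.logb q ((channelOutputs 𝓙₂ n).ncard : ℝ) with hf₂
  set u : ℕ → ℝ := fun n => f n / n with hu
  set u₁ : ℕ → ℝ := fun n => f₁ n / n with hu₁
  set u₂ : ℕ → ℝ := fun n => f₂ n / n with hu₂
  have hcap : capacity 𝓘 = atTop.limsup u := rfl
  have hcap1 : capacity 𝓙₁ = atTop.limsup u₁ := rfl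
  have hcap2 : capacity 𝓙₂ = atTop.limsup u₂ := rfl
  rw [hcap, hcap1, hcap2]
  have hposgen : ∀ {ι : Type} (𝓙 : ι → Finset (Fin q)) (n : ℕ),
      (0 : ℝ) < ((channelOutputs 𝓙 n).ncard : ℝ) := fun 𝓙 n => by
    exact_mod_cast channelOutputs_ncard_pos hq0 𝓙 n
  have h0gen : ∀ {ι : Type} (𝓙 : ι → Finset (Fin q)) (n : ℕ),
      (0 : ℝ) ≤ Real.logb q ((channelOutputs 𝓙 n).ncard : ℝ) := fun 𝓙 n =>
    Real.logb_nonneg hq1 (by exact_mod_cast channelOutputs_ncard_pos hq0 𝓙 n)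
  have hubgen : ∀ {ι : Type} (𝓙 : ι → Finset (Fin q)) (n : ℕ),
      Real.logb q ((channelOutputs 𝓙 n).ncard : ℝ) ≤ n := by
    intro ι 𝓙 n
    have h1 : ((channelOutputs 𝓙 n).ncard : ℝ) ≤ (q : ℝ) ^ n := by
      exact_mod_cast channelOutputs_ncard_le 𝓙 n
    calc Real.logb q ((channelOutputs 𝓙 n).ncard : ℝ)
        ≤ Real.logb q ((q : ℝ) ^ n) := Real.logb_le_logb_of_le hq1 (hposgen 𝓙 n) h1
      _ = n := by rw [Real.logb_pow, Real.logb_self_eq_one hq1, mul_one]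
  have hf0 : ∀ n, 0 ≤ f n := fun n => h0gen 𝓘 n
  have hf₁0 : ∀ n, 0 ≤ f₁ n := fun n => h0gen 𝓙₁ n
  have hf₂0 : ∀ n, 0 ≤ f₂ n := fun n => h0gen 𝓙₂ n
  have hu0 : ∀ n, 0 ≤ u n := fun n => div_nonneg (hf0 n) (Nat.cast_nonneg n)
  have hu₁0 : ∀ n, 0 ≤ u₁ n := fun n => div_nonneg (hf₁0 n) (Nat.cast_nonneg n)
  have hu₂0 : ∀ n, 0 ≤ u₂ n := fun n => div_nonneg (hf₂0 n) (Nat.cast_nonneg n)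
  have hule : ∀ (g : ℕ → ℝ), (∀ n, g n ≤ n) → ∀ n : ℕ, g n / n ≤ 1 := by
    intro g hg n
    rcases Nat.eq_zero_or_pos n with h | h
    · simp [h]
    · rw [div_le_one (by exact_mod_cast h)]
      exact hg n
  have hubd : atTop.IsBoundedUnder (· ≤ ·) u :=
    ⟨1, eventually_map.2 (Eventually.of_forall (hule f (fun n => hubgen 𝓘 n)))⟩
  have hubd1 : atTop.IsBoundedUnder (· ≤ ·) u₁ :=
    ⟨1, eventually_map.2 (Eventually.of_forall (hule f₁ (fun n => hubgen 𝓙₁ n)))⟩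
  have hubd2 : atTop.IsBoundedUnder (· ≤ ·) u₂ :=
    ⟨1, eventually_map.2 (Eventually.of_forall (hule f₂ (fun n => hubgen 𝓙₂ n)))⟩
  have himg1 : ∀ n, channelOutputs 𝓙₁ n =
      (fun (y : Fin t → List (Fin q)) (i : {i // i ∈ S}) => y i.1) '' channelOutputs 𝓘 n := by
    intro n
    rw [channelOutputs_eq_image, channelOutputs_eq_image, ← Set.image_comp]
    rfl
  have himg2 : ∀ n, channelOutputs 𝓙₂ n =
      (fun (y : Fin t → List (Fin q)) (i : {i // i ∈ Sᶜ}) => y i.1) '' channelOutputs 𝓘 n := by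
    intro n
    rw [channelOutputs_eq_image, channelOutputs_eq_image, ← Set.image_comp]
    rfl
  have hdiv : ∀ (x y : ℝ) (n : ℕ), x ≤ y → x / n ≤ y / n := by
    intro x y n h
    rcases Nat.eq_zero_or_pos n with h0 | h0
    · simp [h0]
    · exact (div_le_div_iff_of_pos_right (by exact_mod_cast h0)).2 h
  have hle1 : ∀ n, u₁ n ≤ u n := by
    intro n
    have hc : (channelOutputs 𝓙₁ n).ncard ≤ (channelOutputs 𝓘 n).ncard := by
      rw [himg1 n]
      exact Set.ncard_image_le (channelOutputs_finite _ _)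
    exact hdiv _ _ n (Real.logb_le_logb_of_le hq1 (hposgen 𝓙₁ n) (by exact_mod_cast hc))
  have hle2 : ∀ n, u₂ n ≤ u n := by
    intro n
    have hc : (channelOutputs 𝓙₂ n).ncard ≤ (channelOutputs 𝓘 n).ncard := by
      rw [himg2 n]
      exact Set.ncard_image_le (channelOutputs_finite _ _)
    exact hdiv _ _ n (Real.logb_le_logb_of_le hq1 (hposgen 𝓙₂ n) (by exact_mod_cast hc))
  have hlim1 : atTop.limsup u₁ ≤ atTop.limsup u :=
    limsup_le_limsup (Eventually.of_forall hle1)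
      (isCoboundedUnder_le_of_le atTop hu₁0) hubd
  have hlim2 : atTop.limsup u₂ ≤ atTop.limsup u :=
    limsup_le_limsup (Eventually.of_forall hle2)
      (isCoboundedUnder_le_of_le atTop hu₂0) hubd
  have hc₁0 : 0 ≤ atTop.limsup u₁ :=
    le_limsup_of_frequently_le (Frequently.of_forall hu₁0) hubd1
  set M : ℝ := max (atTop.limsup u₁) (atTop.limsup u₂) with hM
  have hM0 : 0 ≤ M := le_trans hc₁0 (le_max_left _ _)
  refine le_antisymm ?_ (max_le hlim1 hlim2)
  refine le_of_forall_sub_le fun ε hε => ?_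
  rw [sub_le_iff_le_add]
  have hmono1 : ∀ {k m : ℕ}, k ≤ m → f₁ k ≤ f₁ m := by
    intro k m hkm
    refine Real.logb_le_logb_of_le hq1 (hposgen 𝓙₁ k) ?_
    exact_mod_cast Set.ncard_le_ncard (channelOutputs_mono 𝓙₁ b hb1 hkm)
      (channelOutputs_finite _ _)
  have hmono2 : ∀ {k m : ℕ}, k ≤ m → f₂ k ≤ f₂ m := by
    intro k m hkm
    refine Real.logb_le_logb_of_le hq1 (hposgen 𝓙₂ k) ?_
    exact_mod_cast Set.ncard_le_ncard (channelOutputs_mono 𝓙₂ a ha2 hkm)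
      (channelOutputs_finite _ _)
  have hev1 : ∀ᶠ n in atTop, u₁ n < atTop.limsup u₁ + ε :=
    eventually_lt_of_limsup_lt (by linarith) hubd1
  have hev2 : ∀ᶠ n in atTop, u₂ n < atTop.limsup u₂ + ε :=
    eventually_lt_of_limsup_lt (by linarith) hubd2
  obtain ⟨N₁, hN₁⟩ := eventually_atTop.1 hev1
  obtain ⟨N₂, hN₂⟩ := eventually_atTop.1 hev2
  set N : ℕ := max N₁ N₂ + 1 with hN
  set C₁ : ℝ := f₁ N with hC₁
  set C₂ : ℝ := f₂ N with hC₂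
  have hC₁0 : 0 ≤ C₁ := hf₁0 N
  have hC₂0 : 0 ≤ C₂ := hf₂0 N
  have hkey1 : ∀ k : ℕ, f₁ k ≤ (M + ε) * k + C₁ := by
    intro k
    rcases le_or_gt k N with hk | hk
    · have h1 : f₁ k ≤ C₁ := hmono1 hk
      have h2 : 0 ≤ (M + ε) * k := mul_nonneg (by linarith) (Nat.cast_nonneg k)
      linarith
    · have hk1 : N₁ ≤ k := by omega
      have hkpos : (0 : ℝ) < k := by
        have hk0 : 0 < k := by omega
        exact_mod_cast hk0
      have h3 : u₁ k < atTop.limsup u₁ + ε := hN₁ k hk1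
      have h4 : f₁ k < (atTop.limsup u₁ + ε) * k := by
        have h5 := (div_lt_iff₀ hkpos).1 h3
        simpa [hu₁] using h5
      have h5 : atTop.limsup u₁ ≤ M := le_max_left _ _
      nlinarith
  have hkey2 : ∀ k : ℕ, f₂ k ≤ (M + ε) * k + C₂ := by
    intro k
    rcases le_or_gt k N with hk | hk
    · have h1 : f₂ k ≤ C₂ := hmono2 hk
      have h2 : 0 ≤ (M + ε) * k := mul_nonneg (by linarith) (Nat.cast_nonneg k)
      linarith
    · have hk1 : N₂ ≤ k := by omega
      have hkpos : (0 : ℝ) < k := by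
        have hk0 : 0 < k := by omega
        exact_mod_cast hk0
      have h3 : u₂ k < atTop.limsup u₂ + ε := hN₂ k hk1
      have h4 : f₂ k < (atTop.limsup u₂ + ε) * k := by
        have h5 := (div_lt_iff₀ hkpos).1 h3
        simpa [hu₂] using h5
      have h5 : atTop.limsup u₂ ≤ M := le_max_right _ _
      nlinarith
  have hcardbound : ∀ n : ℕ, ((channelOutputs 𝓘 n).ncard : ℝ) ≤
      ((n : ℝ) + 1) * (q : ℝ) ^ ((M + ε) * n + C₁ + C₂) := by
    intro n
    have hsum : ((channelOutputs 𝓘 n).ncard : ℝ) ≤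
        ∑ k ∈ Finset.range (n + 1),
          ((channelOutputs 𝓙₁ k).ncard : ℝ) * ((channelOutputs 𝓙₂ (n - k)).ncard : ℝ) := by
      exact_mod_cast count_split q t 𝓘 S hsep n
    have hterm : ∀ k ∈ Finset.range (n + 1),
        ((channelOutputs 𝓙₁ k).ncard : ℝ) * ((channelOutputs 𝓙₂ (n - k)).ncard : ℝ) ≤
          (q : ℝ) ^ ((M + ε) * n + C₁ + C₂) := by
      intro k hk
      have hkn : k ≤ n := by
        have := Finset.mem_range.1 hk
        omega
      have e1 : ((channelOutputs 𝓙₁ k).ncard : ℝ) = (q : ℝ) ^ f₁ k :=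
        (Real.rpow_logb hqpos hqne1 (hposgen 𝓙₁ k)).symm
      have e2 : ((channelOutputs 𝓙₂ (n - k)).ncard : ℝ) = (q : ℝ) ^ f₂ (n - k) :=
        (Real.rpow_logb hqpos hqne1 (hposgen 𝓙₂ (n - k))).symm
      rw [e1, e2, ← Real.rpow_add hqpos]
      refine Real.rpow_le_rpow_of_exponent_le (le_of_lt hq1) ?_
      have h1 := hkey1 k
      have h2 := hkey2 (n - k)
      have hcast : ((n - k : ℕ) : ℝ) = (n : ℝ) - (k : ℝ) := by
        rw [Nat.cast_sub hkn]
      rw [hcast] at h2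
      nlinarith
    calc ((channelOutputs 𝓘 n).ncard : ℝ)
        ≤ ∑ k ∈ Finset.range (n + 1),
            ((channelOutputs 𝓙₁ k).ncard : ℝ) * ((channelOutputs 𝓙₂ (n - k)).ncard : ℝ) := hsum
      _ ≤ ∑ _k ∈ Finset.range (n + 1), (q : ℝ) ^ ((M + ε) * n + C₁ + C₂) :=
          Finset.sum_le_sum hterm
      _ = ((n : ℝ) + 1) * (q : ℝ) ^ ((M + ε) * n + C₁ + C₂) := by
          rw [Finset.sum_const, Finset.card_range, nsmul_eq_mul]
          push_cast
          ring
  have hfn : ∀ n : ℕ, f n ≤ Real.logb q ((n : ℝ) + 1) + ((M + ε) * n + C₁ + C₂) := by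
    intro n
    have hpow : (0 : ℝ) < (q : ℝ) ^ ((M + ε) * n + C₁ + C₂) := Real.rpow_pos_of_pos hqpos _
    have hn1 : (0 : ℝ) < (n : ℝ) + 1 := by positivity
    calc f n ≤ Real.logb q (((n : ℝ) + 1) * (q : ℝ) ^ ((M + ε) * n + C₁ + C₂)) :=
          Real.logb_le_logb_of_le hq1 (hposgen 𝓘 n) (hcardbound n)
      _ = Real.logb q ((n : ℝ) + 1) + ((M + ε) * n + C₁ + C₂) := by
          rw [Real.logb_mul (ne_of_gt hn1) (ne_of_gt hpow), Real.logb_rpow hqpos hqne1]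
  set w : ℕ → ℝ := fun n => Real.logb q ((n : ℝ) + 1) / n + (C₁ + C₂) / n + (M + ε) with hw
  have huw : ∀ n : ℕ, 1 ≤ n → u n ≤ w n := by
    intro n hn
    have hnpos : (0 : ℝ) < n := by exact_mod_cast hn
    have h1 : u n ≤ (Real.logb q ((n : ℝ) + 1) + ((M + ε) * n + C₁ + C₂)) / n :=
      hdiv _ _ n (hfn n)
    have h2 : (Real.logb q ((n : ℝ) + 1) + ((M + ε) * n + C₁ + C₂)) / n = w n := by
      rw [hw]
      field_simp
      ring
    rw [← h2]
    exact h1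
  have hlogtend : Tendsto (fun n : ℕ => Real.logb q ((n : ℝ) + 1) / n) atTop (nhds 0) := by
    have h0 : Tendsto (fun x : ℝ => Real.log x / x) atTop (nhds 0) :=
      Real.isLittleO_log_id_atTop.tendsto_div_nhds_zero
    have hcomp : Tendsto (fun n : ℕ => ((n : ℝ) + 1)) atTop atTop :=
      tendsto_atTop_add_const_right _ 1 tendsto_natCast_atTop_atTop
    have h1 : Tendsto (fun n : ℕ => Real.log ((n : ℝ) + 1) / ((n : ℝ) + 1)) atTop (nhds 0) :=
      h0.comp hcomp
    have h2 : Tendsto (fun n : ℕ => ((n : ℝ) + 1) / (n : ℝ)) atTop (nhds 1) := by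
      have h3 : Tendsto (fun n : ℕ => 1 + ((n : ℝ))⁻¹) atTop (nhds (1 + 0)) :=
        tendsto_const_nhds.add tendsto_inv_atTop_nhds_zero_nat
      rw [add_zero] at h3
      refine h3.congr' ?_
      filter_upwards [eventually_ge_atTop 1] with n hn
      have hnpos : (0 : ℝ) < n := by exact_mod_cast hn
      field_simp
    have h4 : Tendsto
        (fun n : ℕ => Real.log ((n : ℝ) + 1) / ((n : ℝ) + 1) * (((n : ℝ) + 1) / (n : ℝ)))
        atTop (nhds (0 * 1)) := h1.mul h2
    rw [zero_mul] at h4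
    have h5 : Tendsto (fun n : ℕ => Real.log ((n : ℝ) + 1) / (n : ℝ)) atTop (nhds 0) := by
      refine h4.congr' ?_
      filter_upwards [eventually_ge_atTop 1] with n hn
      have hnpos : (0 : ℝ) < n := by exact_mod_cast hn
      have hn1 : ((n : ℝ) + 1) ≠ 0 := by positivity
      field_simp
    have h6 : Tendsto (fun n : ℕ => Real.log ((n : ℝ) + 1) / (n : ℝ) * (Real.log q)⁻¹)
        atTop (nhds (0 * (Real.log q)⁻¹)) := h5.mul tendsto_const_nhds
    rw [zero_mul] at h6
    refine h6.congr fun n => ?_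
    rw [Real.logb]
    ring
  have hwt : Tendsto w atTop (nhds (0 + 0 + (M + ε))) :=
    (hlogtend.add (tendsto_const_div_atTop_nhds_zero_nat (C₁ + C₂))).add tendsto_const_nhds
  rw [zero_add, zero_add] at hwt
  have hfinal : atTop.limsup u ≤ atTop.limsup w := by
    refine limsup_le_limsup ?_ (isCoboundedUnder_le_of_le atTop hu0) hwt.isBoundedUnder_le
    filter_upwards [eventually_ge_atTop 1] with n hn
    exact huw n hn
  calc atTop.limsup u ≤ atTop.limsup w := hfinal
    _ = M + ε := hwt.limsup_eq
end

section
/- Let 𝓘 = (I_1,…,I_t) be a sequence of coloring channels over Σ = [q] with I_i ∩ I_j = ∅ for all i ≠ j. Then cap(𝓘) = log_q max{ |I_1|, …, |I_t| }. -/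
lemma sum_filter_length_le {q t : ℕ} (𝓘 : Fin t → Finset (Fin q))
    (hdisj : ∀ i j, i ≠ j → 𝓘 i ∩ 𝓘 j = ∅) (x : List (Fin q)) :
    ∑ i, (channelOutput (𝓘 i) x).length ≤ x.length := by
  induction x with
  | nil => simp [channelOutput]
  | cons a l ih =>
    have hcnt : ∀ i, (channelOutput (𝓘 i) (a :: l)).length
        = (channelOutput (𝓘 i) l).length + (if a ∈ 𝓘 i then 1 else 0) := by
      intro i
      simp only [channelOutput, List.filter_cons]
      split <;> rename_i h <;> simp at h <;> simp [h, Nat.add_comm]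
    simp only [hcnt, Finset.sum_add_distrib, List.length_cons]
    have h1 : (∑ i, if a ∈ 𝓘 i then 1 else 0) ≤ 1 := by
      rw [Finset.sum_boole]
      rw [Nat.cast_le_one]
      apply Finset.card_le_one.2
      intro i hi j hj
      simp only [Finset.mem_filter] at hi hj
      by_contra hij
      have := hdisj i j hij
      have : a ∈ 𝓘 i ∩ 𝓘 j := Finset.mem_inter.2 ⟨hi.2, hj.2⟩
      simp_all
    omega

lemma card_upper {q t M : ℕ} (𝓘 : Fin t → Finset (Fin q))
    (hdisj : ∀ i j, i ≠ j → 𝓘 i ∩ 𝓘 j = ∅)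
    (hMle : ∀ i, (𝓘 i).card ≤ M) (hM1 : 1 ≤ M) (n : ℕ) :
    (channelOutputs 𝓘 n).Finite ∧ (channelOutputs 𝓘 n).ncard ≤ (n + 1) ^ t * M ^ n := by
  classical
  set S : Finset (Fin t → Fin (n + 1)) :=
    Finset.univ.filter (fun ℓ => ∑ i, (ℓ i : ℕ) ≤ n) with hS
  set piece : (Fin t → Fin (n + 1)) → Finset (Fin t → List (Fin q)) :=
    fun ℓ => Finset.image
      (fun v : (∀ i, Fin (ℓ i : ℕ) → (𝓘 i : Finset (Fin q))) =>
        fun i => List.ofFn (fun k => ((v i k : Fin q)))) Finset.univ with hpiece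
  have hsub : channelOutputs 𝓘 n ⊆ ↑(S.biUnion piece) := by
    rintro y ⟨x, hxlen, rfl⟩
    have hlenle : ∀ i, (channelOutput (𝓘 i) x).length ≤ n := by
      intro i
      calc (channelOutput (𝓘 i) x).length ≤ x.length := List.length_filter_le _ _
        _ = n := hxlen
    refine Finset.mem_coe.2 (Finset.mem_biUnion.2 ⟨fun i => ⟨(channelOutput (𝓘 i) x).length,
      Nat.lt_succ_of_le (hlenle i)⟩, ?_, ?_⟩)
    · rw [hS]
      simp only [Finset.mem_filter, Finset.mem_univ, true_and]
      calc (∑ i, (channelOutput (𝓘 i) x).length) ≤ x.length :=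
        sum_filter_length_le 𝓘 hdisj x
        _ = n := hxlen
    · rw [hpiece]
      refine Finset.mem_image.2 ⟨fun i k => ⟨(channelOutput (𝓘 i) x).get k, ?_⟩, Finset.mem_univ _, ?_⟩
      · have := List.get_mem (channelOutput (𝓘 i) x) k
        simp only [channelOutput, List.mem_filter, decide_eq_true_eq] at this
        exact this.2
      · funext i
        exact List.ofFn_get _
  have hfin : (channelOutputs 𝓘 n).Finite :=
    Set.Finite.subset (S.biUnion piece).finite_toSet hsub
  refine ⟨hfin, ?_⟩
  have h1 : (channelOutputs 𝓘 n).ncard ≤ (S.biUnion piece).card := by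
    rw [← Set.ncard_coe_finset]
    exact Set.ncard_le_ncard hsub (S.biUnion piece).finite_toSet
  have h2 : ∀ ℓ ∈ S, (piece ℓ).card ≤ M ^ n := by
    intro ℓ hℓ
    have hsum : ∑ i, (ℓ i : ℕ) ≤ n := by
      rw [hS] at hℓ; simpa using hℓ
    calc (piece ℓ).card ≤ Fintype.card (∀ i, Fin (ℓ i : ℕ) → (𝓘 i : Finset (Fin q))) := by
          rw [hpiece]; exact Finset.card_image_le.trans (le_of_eq (Finset.card_univ))
      _ = ∏ i, (𝓘 i).card ^ (ℓ i : ℕ) := by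
          rw [Fintype.card_pi]
          congr 1; funext i
          rw [Fintype.card_fun]
          simp
      _ ≤ ∏ i, M ^ (ℓ i : ℕ) := by
          apply Finset.prod_le_prod' ; intro i _
          exact Nat.pow_le_pow_left (hMle i) _
      _ = M ^ (∑ i, (ℓ i : ℕ)) := by rw [Finset.prod_pow_eq_pow_sum]
      _ ≤ M ^ n := Nat.pow_le_pow_right hM1 hsum
  calc (channelOutputs 𝓘 n).ncard ≤ (S.biUnion piece).card := h1
    _ ≤ ∑ ℓ ∈ S, (piece ℓ).card := Finset.card_biUnion_le
    _ ≤ ∑ _ℓ ∈ S, M ^ n := Finset.sum_le_sum h2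
    _ = S.card * M ^ n := by rw [Finset.sum_const, smul_eq_mul]
    _ ≤ (n + 1) ^ t * M ^ n := by
        apply Nat.mul_le_mul_right
        calc S.card ≤ Fintype.card (Fin t → Fin (n + 1)) := by
              rw [hS]; exact (Finset.card_filter_le _ _).trans (by simp)
          _ = (n + 1) ^ t := by simp

lemma card_lower {q t : ℕ} (𝓘 : Fin t → Finset (Fin q)) (i0 : Fin t) (n : ℕ)
    (hfin : (channelOutputs 𝓘 n).Finite) :
    (𝓘 i0).card ^ n ≤ (channelOutputs 𝓘 n).ncard := by
  classical
  set f : (Fin n → (𝓘 i0 : Finset (Fin q))) → (Fin t → List (Fin q)) :=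
    fun v => fun i => channelOutput (𝓘 i) (List.ofFn (fun k => (v k : Fin q))) with hf
  have hrange : Set.range f ⊆ channelOutputs 𝓘 n := by
    rintro y ⟨v, rfl⟩
    exact ⟨List.ofFn (fun k => (v k : Fin q)), by simp, rfl⟩
  have hinj : Function.Injective f := by
    intro v w h
    have h0 : ∀ v : (Fin n → (𝓘 i0 : Finset (Fin q))),
        f v i0 = List.ofFn (fun k => (v k : Fin q)) := by
      intro v
      rw [hf]
      simp only [channelOutput]
      apply List.filter_eq_self.2
      intro a ha
      simp only [List.mem_ofFn] at ha
      obtain ⟨k, rfl⟩ := ha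
      simp [(v k).2]
    have := congrFun h i0
    rw [h0, h0] at this
    have := List.ofFn_injective this
    funext k
    exact Subtype.ext (congrFun this k)
  calc (𝓘 i0).card ^ n = Fintype.card (Fin n → (𝓘 i0 : Finset (Fin q))) := by
        rw [Fintype.card_fun]; simp
    _ = Nat.card (Fin n → (𝓘 i0 : Finset (Fin q))) := (Nat.card_eq_fintype_card).symm
    _ = Nat.card (Set.range f) := (Nat.card_range_of_injective hinj).symm
    _ = (Set.range f).ncard := rfl
    _ ≤ (channelOutputs 𝓘 n).ncard := Set.ncard_le_ncard hrange hfin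


open Real Filter in
lemma logb_succ_div_tendsto (q t : ℕ) (hq : 2 ≤ q) :
    Tendsto (fun n : ℕ => (t * Real.logb q ((n : ℝ) + 1)) / n) atTop (nhds 0) := by
  have key : Tendsto (fun x : ℝ => Real.log x / x) atTop (nhds 0) :=
    Real.isLittleO_log_id_atTop.tendsto_div_nhds_zero
  have hg : Tendsto (fun n : ℕ => (n : ℝ) + 1) atTop atTop :=
    tendsto_atTop_add_const_right _ 1 tendsto_natCast_atTop_atTop
  have h2 : Tendsto (fun n : ℕ => Real.log ((n : ℝ) + 1) / ((n : ℝ) + 1)) atTop (nhds 0) :=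
    key.comp hg
  have h3 : Tendsto (fun n : ℕ => ((n : ℝ) + 1) / n) atTop (nhds 1) := by
    have base : Tendsto (fun n : ℕ => 1 + (n : ℝ)⁻¹) atTop (nhds 1) := by
      simpa using tendsto_const_nhds.add (tendsto_inv_atTop_nhds_zero_nat (𝕜 := ℝ))
    apply base.congr'
    filter_upwards [eventually_ge_atTop 1] with n hn
    have hn' : (n : ℝ) ≠ 0 := by positivity
    field_simp
  have h4 : Tendsto (fun n : ℕ => Real.log ((n : ℝ) + 1) / n) atTop (nhds 0) := by
    have := h2.mul h3
    rw [zero_mul] at this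
    apply this.congr
    intro n
    have hn1 : ((n : ℝ) + 1) ≠ 0 := by positivity
    field_simp
  have := h4.const_mul ((t : ℝ) / Real.log q)
  rw [mul_zero] at this
  apply this.congr
  intro n
  rw [Real.logb]
  ring

/-- the capacity of pairwise-disjoint coloring channels is
`log_q` of the largest channel size. -/
theorem capacity_of_pairwise_disjoint (q t : ℕ) (hq : 2 ≤ q) (ht : 1 ≤ t)
    (𝓘 : Fin t → Finset (Fin q)) (hne : ∀ i, (𝓘 i).Nonempty)
    (hdisj : ∀ i j, i ≠ j → 𝓘 i ∩ 𝓘 j = ∅) :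
    capacity 𝓘 = Real.logb q ((Finset.univ.sup fun i => (𝓘 i).card : ℕ) : ℝ) := by
  classical
  set M := Finset.univ.sup (fun i => (𝓘 i).card) with hMdef
  have htu : (Finset.univ : Finset (Fin t)).Nonempty := ⟨⟨0, ht⟩, Finset.mem_univ _⟩
  obtain ⟨i0, -, hi0⟩ := Finset.exists_mem_eq_sup Finset.univ htu (fun i => (𝓘 i).card)
  have hMle : ∀ i, (𝓘 i).card ≤ M := fun i => Finset.le_sup (f := fun i => (𝓘 i).card) (Finset.mem_univ i)
  have hM1 : 1 ≤ M := le_trans (Finset.card_pos.2 (hne i0)) (hMle i0)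
  have hq1 : (1 : ℝ) < (q : ℝ) := by
    have : (2 : ℝ) ≤ (q : ℝ) := by exact_mod_cast hq
    linarith
  have hub := fun n => card_upper 𝓘 hdisj hMle hM1 n
  have hlb : ∀ n, M ^ n ≤ (channelOutputs 𝓘 n).ncard := by
    intro n
    rw [hMdef, hi0]
    exact card_lower 𝓘 i0 n (hub n).1
  set L : ℝ := Real.logb q (M : ℝ) with hL
  have hMR : (1 : ℝ) ≤ (M : ℝ) := by exact_mod_cast hM1
  have hLnn : 0 ≤ L := Real.logb_nonneg hq1 hMR
  have hpos : ∀ n, (0 : ℝ) < ((channelOutputs 𝓘 n).ncard : ℝ) := by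
    intro n
    have : 1 ≤ (channelOutputs 𝓘 n).ncard := le_trans (Nat.one_le_pow _ _ hM1) (hlb n)
    exact_mod_cast this
  -- lower eventual bound
  have hlow : ∀ᶠ n : ℕ in Filter.atTop,
      L ≤ Real.logb q ((channelOutputs 𝓘 n).ncard : ℝ) / n := by
    filter_upwards [Filter.eventually_ge_atTop 1] with n hn
    have hnR : (0 : ℝ) < n := by exact_mod_cast hn
    rw [le_div_iff₀ hnR]
    have h1 : ((M : ℝ)) ^ n ≤ ((channelOutputs 𝓘 n).ncard : ℝ) := by
      exact_mod_cast hlb n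
    calc L * n = Real.logb q ((M : ℝ) ^ n) := by rw [Real.logb_pow]; ring
      _ ≤ Real.logb q ((channelOutputs 𝓘 n).ncard : ℝ) :=
        Real.logb_le_logb_of_le hq1 (by positivity) h1
  -- upper eventual bound
  have hupp : ∀ᶠ n : ℕ in Filter.atTop,
      Real.logb q ((channelOutputs 𝓘 n).ncard : ℝ) / n
        ≤ L + (t * Real.logb q ((n : ℝ) + 1)) / n := by
    filter_upwards [Filter.eventually_ge_atTop 1] with n hn
    have hnR : (0 : ℝ) < n := by exact_mod_cast hn
    have h1 : ((channelOutputs 𝓘 n).ncard : ℝ) ≤ ((n : ℝ) + 1) ^ t * (M : ℝ) ^ n := by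
      have := (hub n).2
      calc ((channelOutputs 𝓘 n).ncard : ℝ) ≤ (((n + 1) ^ t * M ^ n : ℕ) : ℝ) := by
            exact_mod_cast this
        _ = ((n : ℝ) + 1) ^ t * (M : ℝ) ^ n := by push_cast; ring
    have h2 : Real.logb q ((channelOutputs 𝓘 n).ncard : ℝ)
        ≤ t * Real.logb q ((n : ℝ) + 1) + n * L := by
      calc Real.logb q ((channelOutputs 𝓘 n).ncard : ℝ)
          ≤ Real.logb q (((n : ℝ) + 1) ^ t * (M : ℝ) ^ n) :=
            Real.logb_le_logb_of_le hq1 (hpos n) h1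
        _ = t * Real.logb q ((n : ℝ) + 1) + n * L := by
            rw [Real.logb_mul (by positivity) (by positivity), Real.logb_pow, Real.logb_pow]
    rw [div_le_iff₀ hnR]
    calc Real.logb q ((channelOutputs 𝓘 n).ncard : ℝ)
        ≤ t * Real.logb q ((n : ℝ) + 1) + n * L := h2
      _ = (L + (t * Real.logb q ((n : ℝ) + 1)) / n) * n := by field_simp; ring
  have hupT : Filter.Tendsto (fun n : ℕ => L + (t * Real.logb q ((n : ℝ) + 1)) / n)
      Filter.atTop (nhds L) := by
    have := (logb_succ_div_tendsto q t hq).const_add L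
    simpa using this
  have htend : Filter.Tendsto
      (fun n : ℕ => Real.logb q ((channelOutputs 𝓘 n).ncard : ℝ) / n)
      Filter.atTop (nhds L) :=
    tendsto_of_tendsto_of_tendsto_of_le_of_le' tendsto_const_nhds hupT hlow hupp
  rw [capacity, htend.limsup_eq]
end

section
/- Fix integers k,p,t ≥ 1 and q ≥ 2, and define g(y) = (1−y) log_q k + y log_q p + (t−(t−1)y) H( y/(t−(t−1)y) ) log_q 2 on (0,1). Then g is twice differentiable on (0,1) with g''(y) = − t / ( ln q · y (1−y)(t−(t−1)y) ) < 0 for all y ∈ (0,1), and there exists a unique y* ∈ (0,1) such that p·t·(1−y*)^t = k·y*·(1−(t−1)y*/t)^{t−1}; at this y*, g attains its maximum over (0,1). -/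
/-- Auxiliary: `ln q · g`, written with natural logarithms only. -/
noncomputable def sunflowerG (k p t : ℕ) : ℝ → ℝ := fun y =>
  (1-y) * Real.log k + y * Real.log p - y * Real.log y
  - (t:ℝ) * (1-y) * Real.log (1-y) - (t:ℝ) * (1-y) * Real.log t
  + ((t:ℝ) - ((t:ℝ)-1)*y) * Real.log ((t:ℝ) - ((t:ℝ)-1)*y)

/-- Auxiliary: the derivative of `sunflowerG`. -/
noncomputable def sunflowerD (k p t : ℕ) : ℝ → ℝ := fun y =>
  Real.log p - Real.log k - Real.log y + (t:ℝ) * Real.log (1-y)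
  + (t:ℝ) * Real.log t - ((t:ℝ)-1) * Real.log ((t:ℝ) - ((t:ℝ)-1)*y)

lemma sunflower_s_pos {t : ℕ} (ht : 1 ≤ t) {y : ℝ} (hy : y ∈ Set.Ioo (0:ℝ) 1) :
    0 < (t:ℝ) - ((t:ℝ)-1)*y := by
  have hT : (1:ℝ) ≤ t := by exact_mod_cast ht
  nlinarith [hy.1, hy.2]

lemma sunflowerG_hasDeriv (k p t : ℕ) (ht : 1 ≤ t) {y : ℝ} (hy : y ∈ Set.Ioo (0:ℝ) 1) :
    HasDerivAt (sunflowerG k p t) (sunflowerD k p t y) y := by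
  have hy0 : y ≠ 0 := ne_of_gt hy.1
  have h1y : (1:ℝ) - y ≠ 0 := by have := hy.2; intro h; linarith [hy.2, h]
  have hs := sunflower_s_pos ht hy
  have hsne : (t:ℝ) - ((t:ℝ)-1)*y ≠ 0 := ne_of_gt hs
  have h1 : HasDerivAt (fun y : ℝ => y * Real.log y) (Real.log y + 1) y :=
    Real.hasDerivAt_mul_log hy0
  have hlin : HasDerivAt (fun y : ℝ => 1 - y) (-1 : ℝ) y := by
    simpa using (hasDerivAt_id y).const_sub 1
  have h2 : HasDerivAt (fun y : ℝ => (1-y) * Real.log (1-y))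
      (-(Real.log (1-y) + 1)) y := by
    have := (Real.hasDerivAt_mul_log h1y).comp y hlin
    simpa [mul_comm, Function.comp_def] using this
  have hlin2 : HasDerivAt (fun y : ℝ => (t:ℝ) - ((t:ℝ)-1)*y) (-((t:ℝ)-1)) y := by
    simpa using ((hasDerivAt_id y).const_mul ((t:ℝ)-1)).const_sub (t:ℝ)
  have h3 : HasDerivAt (fun y : ℝ => ((t:ℝ) - ((t:ℝ)-1)*y) * Real.log ((t:ℝ) - ((t:ℝ)-1)*y))
      ((Real.log ((t:ℝ) - ((t:ℝ)-1)*y) + 1) * (-((t:ℝ)-1))) y := by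
    exact (Real.hasDerivAt_mul_log hsne).comp y hlin2
  have h4 : HasDerivAt (fun y : ℝ => (1-y) * Real.log k) (-Real.log k) y := by
    simpa using hlin.mul_const (Real.log k)
  have h5 : HasDerivAt (fun y : ℝ => y * Real.log p) (Real.log p) y := by
    simpa using (hasDerivAt_id y).mul_const (Real.log p)
  have h6 : HasDerivAt (fun y : ℝ => (t:ℝ) * (1-y) * Real.log (1-y))
      ((t:ℝ) * (-(Real.log (1-y) + 1))) y := by
    have := h2.const_mul (t:ℝ)
    simpa [mul_assoc] using this
  have h7 : HasDerivAt (fun y : ℝ => (t:ℝ) * (1-y) * Real.log t)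
      (-((t:ℝ) * Real.log t)) y := by
    have := (hlin.const_mul (t:ℝ)).mul_const (Real.log t)
    simpa [mul_assoc, mul_comm] using this
  have := ((((h4.add h5).sub h1).sub h6).sub h7).add h3
  refine this.congr_deriv ?_
  unfold sunflowerD
  ring

lemma sunflowerD_hasDeriv (k p t : ℕ) (ht : 1 ≤ t) {y : ℝ} (hy : y ∈ Set.Ioo (0:ℝ) 1) :
    HasDerivAt (sunflowerD k p t)
      (-((t:ℝ) / (y * (1-y) * ((t:ℝ) - ((t:ℝ)-1)*y)))) y := by
  have hy0 : y ≠ 0 := ne_of_gt hy.1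
  have h1y0 : (0:ℝ) < 1 - y := by linarith [hy.2]
  have h1y : (1:ℝ) - y ≠ 0 := ne_of_gt h1y0
  have hs := sunflower_s_pos ht hy
  have hsne : (t:ℝ) - ((t:ℝ)-1)*y ≠ 0 := ne_of_gt hs
  have hlin : HasDerivAt (fun y : ℝ => 1 - y) (-1 : ℝ) y := by
    simpa using (hasDerivAt_id y).const_sub 1
  have hlin2 : HasDerivAt (fun y : ℝ => (t:ℝ) - ((t:ℝ)-1)*y) (-((t:ℝ)-1)) y := by
    simpa using ((hasDerivAt_id y).const_mul ((t:ℝ)-1)).const_sub (t:ℝ)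
  have h1 : HasDerivAt (fun y : ℝ => Real.log y) (1/y) y := by
    simpa [one_div] using Real.hasDerivAt_log hy0
  have h2 : HasDerivAt (fun y : ℝ => Real.log (1-y)) (-(1/(1-y))) y := by
    have := (Real.hasDerivAt_log h1y).comp y hlin
    simpa [one_div, Function.comp_def] using this
  have h3 : HasDerivAt (fun y : ℝ => Real.log ((t:ℝ) - ((t:ℝ)-1)*y))
      (-(((t:ℝ)-1)/((t:ℝ) - ((t:ℝ)-1)*y))) y := by
    have h := (Real.hasDerivAt_log hsne).comp y hlin2
    refine h.congr_deriv ?_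
    ring
  have h4 : HasDerivAt (fun y : ℝ => Real.log (p:ℝ) - Real.log (k:ℝ)) (0:ℝ) y :=
    hasDerivAt_const _ _
  have := (((h4.sub h1).add (h2.const_mul (t:ℝ))).add
      (hasDerivAt_const y ((t:ℝ) * Real.log t))).sub (h3.const_mul ((t:ℝ)-1))
  refine this.congr_deriv ?_
  generalize hS : (t:ℝ) - ((t:ℝ)-1)*y = S at hsne ⊢
  field_simp
  rw [← hS]
  ring

lemma sunflower_g_eq_G (q k p t : ℕ) (hq : 2 ≤ q) (ht : 1 ≤ t)
    {y : ℝ} (hy : y ∈ Set.Ioo (0:ℝ) 1) :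
    (1 - y) * Real.logb q k + y * Real.logb q p +
      ((t : ℝ) - ((t : ℝ) - 1) * y) * binH (y / ((t : ℝ) - ((t : ℝ) - 1) * y)) *
        Real.logb q 2 = sunflowerG k p t y / Real.log q := by
  have hy0 : (0:ℝ) < y := hy.1
  have h1y : (0:ℝ) < 1 - y := by linarith [hy.2]
  have hs := sunflower_s_pos ht hy
  have hT : (0:ℝ) < t := by positivity
  have hq1 : (1:ℝ) < q := by exact_mod_cast lt_of_lt_of_le one_lt_two hq
  have hlq : Real.log q ≠ 0 := ne_of_gt (Real.log_pos hq1)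
  have hlog2 : Real.log 2 ≠ 0 := ne_of_gt (Real.log_pos one_lt_two)
  set s : ℝ := (t:ℝ) - ((t:ℝ)-1)*y with hsdef
  have hsne : s ≠ 0 := ne_of_gt hs
  have h1x : 1 - y / s = (t:ℝ) * (1-y) / s := by
    rw [eq_div_iff hsne]; field_simp; rw [hsdef]; ring
  have hb : s * binH (y/s) * Real.logb q 2
      = (-(y * Real.log y) - (t:ℝ)*(1-y)*Real.log t - (t:ℝ)*(1-y)*Real.log (1-y)
          + s * Real.log s) / Real.log q := by
    unfold binH Real.logb
    rw [h1x, Real.log_div (ne_of_gt hy0) hsne,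
        Real.log_div (by positivity) hsne,
        Real.log_mul (ne_of_gt hT) (ne_of_gt h1y)]
    field_simp
    ring
  rw [hb]
  unfold Real.logb sunflowerG
  rw [← hsdef]
  field_simp
  ring

lemma sunflower_eq_iff (k p t : ℕ) (hk : 1 ≤ k) (hp : 1 ≤ p) (ht : 1 ≤ t)
    {y : ℝ} (hy : y ∈ Set.Ioo (0:ℝ) 1) :
    ((p : ℝ) * t * (1 - y) ^ t = (k : ℝ) * y * (1 - ((t : ℝ) - 1) * y / t) ^ (t - 1))
    ↔ sunflowerD k p t y = 0 := by
  have hy0 : (0:ℝ) < y := hy.1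
  have h1y : (0:ℝ) < 1 - y := by linarith [hy.2]
  have hs := sunflower_s_pos ht hy
  have hT : (0:ℝ) < t := by exact_mod_cast lt_of_lt_of_le Nat.zero_lt_one ht
  have hk0 : (0:ℝ) < k := by exact_mod_cast lt_of_lt_of_le Nat.zero_lt_one hk
  have hp0 : (0:ℝ) < p := by exact_mod_cast lt_of_lt_of_le Nat.zero_lt_one hp
  set s : ℝ := (t:ℝ) - ((t:ℝ)-1)*y with hsdef
  have hfrac : 1 - ((t:ℝ)-1)*y/t = s / t := by rw [hsdef]; field_simp
  have hcast : ((t - 1 : ℕ) : ℝ) = (t:ℝ) - 1 := by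
    have := Nat.cast_sub ht (R := ℝ); simpa using this
  have htt : (t:ℝ)^t = (t:ℝ)^(t-1) * t := by
    have h := pow_succ (t:ℝ) (t-1)
    rwa [Nat.sub_add_cancel ht] at h
  have step1 : ((p : ℝ) * t * (1 - y) ^ t = (k : ℝ) * y * (1 - ((t : ℝ) - 1) * y / t) ^ (t - 1))
      ↔ (p:ℝ) * (1-y)^t * (t:ℝ)^t = (k:ℝ) * y * s^(t-1) := by
    rw [hfrac, div_pow]
    rw [← mul_div_assoc, eq_div_iff (by positivity)]
    rw [htt]
    constructor <;> intro h <;> linear_combination h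
  have hA : Real.log ((p:ℝ) * (1-y)^t * (t:ℝ)^t)
      = Real.log p + (t:ℝ)*Real.log (1-y) + (t:ℝ)*Real.log t := by
    rw [Real.log_mul (by positivity) (by positivity),
        Real.log_mul (by positivity) (by positivity), Real.log_pow, Real.log_pow]
  have hB : Real.log ((k:ℝ) * y * s^(t-1))
      = Real.log k + Real.log y + ((t:ℝ)-1)*Real.log s := by
    rw [Real.log_mul (by positivity) (by positivity),
        Real.log_mul (by positivity) (by positivity), Real.log_pow, hcast]
  have hD : sunflowerD k p t y = Real.log ((p:ℝ) * (1-y)^t * (t:ℝ)^t)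
      - Real.log ((k:ℝ) * y * s^(t-1)) := by
    rw [hA, hB]; unfold sunflowerD; rw [← hsdef]; ring
  rw [step1, hD, sub_eq_zero]
  constructor
  · intro h; rw [h]
  · intro h
    exact Real.log_injOn_pos (by simp [Set.mem_Ioi]; positivity)
      (by simp [Set.mem_Ioi]; positivity) h

lemma sunflowerD_anti (k p t : ℕ) (ht : 1 ≤ t) :
    StrictAntiOn (sunflowerD k p t) (Set.Ioo (0:ℝ) 1) := by
  apply strictAntiOn_of_deriv_neg (convex_Ioo 0 1)
  · intro x hx
    exact ((sunflowerD_hasDeriv k p t ht hx).differentiableAt).continuousAt.continuousWithinAt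
  · intro x hx
    rw [interior_Ioo] at hx
    rw [(sunflowerD_hasDeriv k p t ht hx).deriv]
    have hx0 : (0:ℝ) < x := hx.1
    have h1x : (0:ℝ) < 1 - x := by linarith [hx.2]
    have hs := sunflower_s_pos ht hx
    have hT : (0:ℝ) < t := by positivity
    have : 0 < (t:ℝ) / (x * (1-x) * ((t:ℝ) - ((t:ℝ)-1)*x)) := by positivity
    linarith

/-- properties of the sunflower objective function `g`:
second derivative formula (negative on `(0,1)`), existence and uniqueness of the
critical point `y*`, and maximality of `g` at `y*`. -/
theorem sunflower_g_properties (q k p t : ℕ) (hq : 2 ≤ q)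
    (hk : 1 ≤ k) (hp : 1 ≤ p) (ht : 1 ≤ t)
    (g : ℝ → ℝ)
    (hg : ∀ y : ℝ, g y = (1 - y) * Real.logb q k + y * Real.logb q p +
      ((t : ℝ) - ((t : ℝ) - 1) * y) * binH (y / ((t : ℝ) - ((t : ℝ) - 1) * y)) *
        Real.logb q 2) :
    (∀ y ∈ Set.Ioo (0 : ℝ) 1,
      DifferentiableAt ℝ g y ∧ DifferentiableAt ℝ (deriv g) y ∧
      deriv (deriv g) y =
        -((t : ℝ) / (Real.log q * (y * (1 - y) * ((t : ℝ) - ((t : ℝ) - 1) * y)))) ∧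
      deriv (deriv g) y < 0) ∧
    (∃! ystar : ℝ, ystar ∈ Set.Ioo (0 : ℝ) 1 ∧
      (p : ℝ) * t * (1 - ystar) ^ t =
        (k : ℝ) * ystar * (1 - ((t : ℝ) - 1) * ystar / t) ^ (t - 1)) ∧
    (∀ ystar ∈ Set.Ioo (0 : ℝ) 1,
      (p : ℝ) * t * (1 - ystar) ^ t =
        (k : ℝ) * ystar * (1 - ((t : ℝ) - 1) * ystar / t) ^ (t - 1) →
      ∀ y ∈ Set.Ioo (0 : ℝ) 1, g y ≤ g ystar) := by
  have hq1 : (1:ℝ) < q := by exact_mod_cast lt_of_lt_of_le one_lt_two hq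
  have hlq : (0:ℝ) < Real.log q := Real.log_pos hq1
  have hT : (0:ℝ) < t := by exact_mod_cast lt_of_lt_of_le Nat.zero_lt_one ht
  have hk0 : (0:ℝ) < k := by exact_mod_cast lt_of_lt_of_le Nat.zero_lt_one hk
  have hp0 : (0:ℝ) < p := by exact_mod_cast lt_of_lt_of_le Nat.zero_lt_one hp
  -- g agrees with sunflowerG / log q on (0,1)
  have hgG : ∀ y ∈ Set.Ioo (0:ℝ) 1, g y = sunflowerG k p t y / Real.log q := by
    intro y hy
    rw [hg]
    exact sunflower_g_eq_G q k p t hq ht hy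
  -- first derivative of g
  have hgd : ∀ y ∈ Set.Ioo (0:ℝ) 1,
      HasDerivAt g (sunflowerD k p t y / Real.log q) y := by
    intro y hy
    have h := (sunflowerG_hasDeriv k p t ht hy).div_const (Real.log q)
    apply h.congr_of_eventuallyEq
    filter_upwards [Ioo_mem_nhds hy.1 hy.2] with z hz using hgG z hz
  have hderiv1 : ∀ y ∈ Set.Ioo (0:ℝ) 1,
      deriv g y = sunflowerD k p t y / Real.log q := fun y hy => (hgd y hy).deriv
  -- second derivative of g
  have hgd2 : ∀ y ∈ Set.Ioo (0:ℝ) 1,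
      HasDerivAt (deriv g)
        (-((t:ℝ) / (y * (1-y) * ((t:ℝ) - ((t:ℝ)-1)*y))) / Real.log q) y := by
    intro y hy
    have h := (sunflowerD_hasDeriv k p t ht hy).div_const (Real.log q)
    apply h.congr_of_eventuallyEq
    filter_upwards [Ioo_mem_nhds hy.1 hy.2] with z hz using hderiv1 z hz
  refine ⟨?_, ?_, ?_⟩
  · -- derivative properties
    intro y hy
    have hy0 : (0:ℝ) < y := hy.1
    have h1y : (0:ℝ) < 1 - y := by linarith [hy.2]
    have hs := sunflower_s_pos ht hy
    have h2' : deriv (deriv g) y =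
        -((t : ℝ) / (Real.log q * (y * (1 - y) * ((t : ℝ) - ((t : ℝ) - 1) * y)))) := by
      rw [(hgd2 y hy).deriv]
      rw [neg_div, div_div]
      ring_nf
    refine ⟨(hgd y hy).differentiableAt, (hgd2 y hy).differentiableAt, h2', ?_⟩
    rw [h2']
    have : 0 < (t:ℝ) / (Real.log q * (y * (1 - y) * ((t:ℝ) - ((t:ℝ)-1)*y))) := by
      positivity
    linarith
  · -- existence and uniqueness of the critical point
    set F : ℝ → ℝ := fun y => (p:ℝ) * t * (1 - y) ^ t -
      (k:ℝ) * y * (1 - ((t:ℝ) - 1) * y / t) ^ (t - 1) with hF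
    have hFc : Continuous F := by
      apply Continuous.sub
      · exact (continuous_const.mul ((continuous_const.sub continuous_id).pow t))
      · exact (continuous_const.mul continuous_id).mul
          ((continuous_const.sub ((continuous_const.mul continuous_id).div_const _)).pow (t-1))
    have hF0 : 0 < F 0 := by
      simp only [hF]
      norm_num
      positivity
    have hF1 : F 1 < 0 := by
      have h1 : (1:ℝ) - ((t:ℝ) - 1) * 1 / t = 1 / t := by field_simp; ring
      simp only [hF]
      rw [h1, show (1:ℝ) - 1 = 0 by norm_num, zero_pow (by omega : t ≠ 0)]
      have : 0 < (k:ℝ) * 1 * (1/(t:ℝ))^(t-1) := by positivity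
      linarith
    have h0mem : (0:ℝ) ∈ Set.Ioo (F 1) (F 0) := ⟨hF1, hF0⟩
    obtain ⟨y0, hy0mem, hy0val⟩ :=
      intermediate_value_Ioo' (by norm_num : (0:ℝ) ≤ 1) hFc.continuousOn h0mem
    have hy0eq : (p : ℝ) * t * (1 - y0) ^ t =
        (k : ℝ) * y0 * (1 - ((t : ℝ) - 1) * y0 / t) ^ (t - 1) := by
      have := hy0val
      simp only [hF] at this
      linarith [sub_eq_zero.mp this]
    refine ⟨y0, ⟨hy0mem, hy0eq⟩, ?_⟩
    rintro y1 ⟨hy1mem, hy1eq⟩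
    have hD0 : sunflowerD k p t y0 = 0 :=
      (sunflower_eq_iff k p t hk hp ht hy0mem).mp hy0eq
    have hD1 : sunflowerD k p t y1 = 0 :=
      (sunflower_eq_iff k p t hk hp ht hy1mem).mp hy1eq
    exact (sunflowerD_anti k p t ht).injOn hy1mem hy0mem (hD1.trans hD0.symm)
  · -- maximality
    intro ystar hstar heq y hy
    have hDstar : sunflowerD k p t ystar = 0 :=
      (sunflower_eq_iff k p t hk hp ht hstar).mp heq
    have hderivpos : ∀ x ∈ Set.Ioo (0:ℝ) 1, x < ystar → 0 < deriv g x := by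
      intro x hx hxs
      rw [hderiv1 x hx]
      have : 0 < sunflowerD k p t x := by
        have := sunflowerD_anti k p t ht hx hstar hxs
        rw [hDstar] at this
        exact this
      positivity
    have hderivneg : ∀ x ∈ Set.Ioo (0:ℝ) 1, ystar < x → deriv g x < 0 := by
      intro x hx hxs
      rw [hderiv1 x hx]
      have hneg : sunflowerD k p t x < 0 := by
        have := sunflowerD_anti k p t ht hstar hx hxs
        rw [hDstar] at this
        exact this
      exact div_neg_of_neg_of_pos hneg hlq
    have hcont : ∀ a b : ℝ, Set.Icc a b ⊆ Set.Ioo (0:ℝ) 1 → ContinuousOn g (Set.Icc a b) := by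
      intro a b hab
      intro x hx
      exact ((hgd x (hab hx)).differentiableAt).continuousAt.continuousWithinAt
    rcases lt_trichotomy y ystar with hlt | heqy | hgt
    · have hsub : Set.Icc y ystar ⊆ Set.Ioo (0:ℝ) 1 := fun x hx =>
        ⟨lt_of_lt_of_le hy.1 hx.1, lt_of_le_of_lt hx.2 hstar.2⟩
      have hmono : StrictMonoOn g (Set.Icc y ystar) := by
        apply strictMonoOn_of_deriv_pos (convex_Icc y ystar) (hcont y ystar hsub)
        intro x hx
        rw [interior_Icc] at hx
        exact hderivpos x (hsub ⟨le_of_lt hx.1, le_of_lt hx.2⟩) hx.2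
      exact le_of_lt (hmono ⟨le_refl y, le_of_lt hlt⟩
        ⟨le_of_lt hlt, le_refl ystar⟩ hlt)
    · rw [heqy]
    · have hsub : Set.Icc ystar y ⊆ Set.Ioo (0:ℝ) 1 := fun x hx =>
        ⟨lt_of_lt_of_le hstar.1 hx.1, lt_of_le_of_lt hx.2 hy.2⟩
      have hanti : StrictAntiOn g (Set.Icc ystar y) := by
        apply strictAntiOn_of_deriv_neg (convex_Icc ystar y) (hcont ystar y hsub)
        intro x hx
        rw [interior_Icc] at hx
        exact hderivneg x (hsub ⟨le_of_lt hx.1, le_of_lt hx.2⟩) hx.1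
      exact le_of_lt (hanti ⟨le_refl ystar, le_of_lt hgt⟩
        ⟨le_of_lt hgt, le_refl y⟩ hgt)
end

section
/- Let 𝓘 = (I_1, I_2) be two coloring channels over Σ = [q] with |I_1 ∩ I_2| = k, |I_1 \ I_2| = p_1, |I_2 \ I_1| = p_2, for integers k, p_1, p_2 ≥ 1. Define M(x_1,x_2) = (1−x_1−x_2) log_q k + x_1 log_q p_1 + x_2 log_q p_2 + (1−x_2) H( x_1/(1−x_2) ) log_q 2 + (1−x_1) H( x_2/(1−x_1) ) log_q 2, and set x_1* = 1/2 − (k+p_2−p_1) / ( 2√((k+p_1+p_2)² − 4p_1p_2) ), x_2* = 1/2 − (k+p_1−p_2) / ( 2√((k+p_1+p_2)² − 4p_1p_2) ). Then cap(𝓘) = M(x_1*, x_2*). -/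
lemma logb2_mul (q : ℕ) (t : ℝ) : Real.logb 2 t * Real.logb q 2 = Real.logb q t := by
  unfold Real.logb
  have h2 : Real.log 2 ≠ 0 := by
    have := Real.log_pos (by norm_num : (1:ℝ) < 2); linarith
  field_simp

lemma binH_mul (q : ℕ) (c x : ℝ) :
    c * binH x * Real.logb q 2 =
      -(c * x * Real.logb q x) - c * (1 - x) * Real.logb q (1 - x) := by
  unfold binH
  rw [← logb2_mul q x, ← logb2_mul q (1 - x)]
  ring

lemma M_val (q : ℕ) (K P1 P2 : ℝ) (hK : 1 ≤ K) (hP1 : 1 ≤ P1) (hP2 : 1 ≤ P2)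
    (x1s x2s : ℝ)
    (hx1 : x1s = 1 / 2 - (K + P2 - P1) / (2 * Real.sqrt ((K + P1 + P2) ^ 2 - 4 * P1 * P2)))
    (hx2 : x2s = 1 / 2 - (K + P1 - P2) / (2 * Real.sqrt ((K + P1 + P2) ^ 2 - 4 * P1 * P2))) :
    (1 - x1s - x2s) * Real.logb q K + x1s * Real.logb q P1 + x2s * Real.logb q P2 +
      (1 - x2s) * binH (x1s / (1 - x2s)) * Real.logb q 2 +
      (1 - x1s) * binH (x2s / (1 - x1s)) * Real.logb q 2
    = Real.logb q (((K + P1 + P2) + Real.sqrt ((K + P1 + P2) ^ 2 - 4 * P1 * P2)) / 2) := by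
  set s : ℝ := K + P1 + P2 with hs
  have hin : (0:ℝ) < s ^ 2 - 4 * P1 * P2 := by nlinarith [sq_nonneg (P1 - P2)]
  set D : ℝ := Real.sqrt (s ^ 2 - 4 * P1 * P2) with hDdef
  have hD2 : D ^ 2 = s ^ 2 - 4 * P1 * P2 := Real.sq_sqrt hin.le
  have hDpos : 0 < D := Real.sqrt_pos.mpr hin
  set lam : ℝ := (s + D) / 2 with hlam
  have hlampos : 0 < lam := by
    have : 0 < s := by nlinarith
    positivity
  have hlam2 : lam ^ 2 = s * lam - P1 * P2 := by
    have : (2 * lam - s) ^ 2 = D ^ 2 := by rw [hlam]; ring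
    nlinarith [this, hD2]
  have hlamP1 : P1 < lam := by nlinarith [hD2, hDpos]
  have hlamP2 : P2 < lam := by nlinarith [hD2, hDpos]
  -- key linear identities
  have h2s : 1 - x2s = (lam - P2) / D := by
    rw [hx2, hlam]; field_simp; ring
  have h1s : 1 - x1s = (lam - P1) / D := by
    rw [hx1, hlam]; field_simp; ring
  have key1 : lam * (lam - K - P2) = P1 * (lam - P2) := by linear_combination hlam2
  have key2 : lam * (lam - K - P1) = P2 * (lam - P1) := by linear_combination hlam2
  have hx1v : x1s = P1 * (lam - P2) / (D * lam) := by
    have h : x1s = (lam - K - P2) / D := by rw [hx1, hlam]; field_simp; ring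
    rw [h, div_eq_div_iff hDpos.ne' (by positivity)]
    linear_combination D * key1
  have hx2v : x2s = P2 * (lam - P1) / (D * lam) := by
    have h : x2s = (lam - K - P1) / D := by rw [hx2, hlam]; field_simp; ring
    rw [h, div_eq_div_iff hDpos.ne' (by positivity)]
    linear_combination D * key2
  have hprod : (lam - P1) * (lam - P2) = K * lam := by linear_combination hlam2
  have hA : lam - P2 ≠ 0 := by linarith
  have hA1 : lam - P1 ≠ 0 := by linarith
  have hB : D ≠ 0 := hDpos.ne'
  have hC : lam ≠ 0 := hlampos.ne'
  have hsum : 1 - x1s - x2s = K / D := by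
    rw [show (1:ℝ) - x1s - x2s = (1 - x1s) + (1 - x2s) - 1 by ring, h1s, h2s]
    field_simp
    ring
  -- ratios
  have hr1 : x1s / (1 - x2s) = P1 / lam := by
    rw [hx1v, h2s]
    field_simp
  have hr2 : x2s / (1 - x1s) = P2 / lam := by
    rw [hx2v, h1s]
    field_simp
  have hKpos : (0:ℝ) < K := by linarith
  have e1 : (1 - x2s) * (P1 / lam) = x1s := by rw [hx1v, h2s]; field_simp
  have e2 : (1 - x1s) * (P2 / lam) = x2s := by rw [hx2v, h1s]; field_simp
  have e3 : (1 - x2s) * (1 - P1 / lam) = 1 - x1s - x2s := by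
    rw [hsum, h2s, show (1:ℝ) - P1 / lam = (lam - P1) / lam by field_simp,
      div_mul_div_comm, show (lam - P2) * (lam - P1) = lam * K by linear_combination hprod,
      mul_comm D lam, mul_div_mul_left _ _ hC]
  have e4 : (1 - x1s) * (1 - P2 / lam) = 1 - x1s - x2s := by
    rw [hsum, h1s, show (1:ℝ) - P2 / lam = (lam - P2) / lam by field_simp,
      div_mul_div_comm, show (lam - P1) * (lam - P2) = lam * K by linear_combination hprod,
      mul_comm D lam, mul_div_mul_left _ _ hC]
  have l1 : Real.logb q (P1 / lam) = Real.logb q P1 - Real.logb q lam :=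
    Real.logb_div (by linarith) hC
  have l2 : Real.logb q (P2 / lam) = Real.logb q P2 - Real.logb q lam :=
    Real.logb_div (by linarith) hC
  have l3 : Real.logb q (1 - P1 / lam) = Real.logb q (lam - P1) - Real.logb q lam := by
    rw [show (1:ℝ) - P1 / lam = (lam - P1) / lam by field_simp]
    exact Real.logb_div hA1 hC
  have l4 : Real.logb q (1 - P2 / lam) = Real.logb q (lam - P2) - Real.logb q lam := by
    rw [show (1:ℝ) - P2 / lam = (lam - P2) / lam by field_simp]
    exact Real.logb_div hA hC
  have l5 : Real.logb q (lam - P1) + Real.logb q (lam - P2) =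
      Real.logb q K + Real.logb q lam := by
    rw [← Real.logb_mul hA1 hA, hprod, Real.logb_mul hKpos.ne' hC]
  rw [hr1, hr2, binH_mul, binH_mul, e1, e2, e3, e4, l1, l2, l3, l4]
  linear_combination (-(1 - x1s - x2s)) * l5

namespace CapTwo

variable {q : ℕ}

/-- allowed adjacency: not (a ∈ P2 and b ∈ P1) -/
def good (I1 I2 : Finset (Fin q)) (a b : Fin q) : Prop :=
  ¬((a ∈ I2 ∧ a ∉ I1) ∧ (b ∈ I1 ∧ b ∉ I2))

def Avoid (I1 I2 : Finset (Fin q)) (x : List (Fin q)) : Prop :=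
  (∀ a ∈ x, a ∈ I1 ∪ I2) ∧ x.Chain' (good I1 I2)

def listFinset (q : ℕ) : ℕ → Finset (List (Fin q))
  | 0 => {[]}
  | n + 1 => (Finset.univ ×ˢ listFinset q n).image fun p => p.1 :: p.2

lemma mem_listFinset (x : List (Fin q)) (n : ℕ) : x ∈ listFinset q n ↔ x.length = n := by
  induction n generalizing x with
  | zero => cases x <;> simp [listFinset]
  | succ n ih => cases x <;> simp [listFinset, ih]

open Classical in
noncomputable def AvF (I1 I2 : Finset (Fin q)) (n : ℕ) : Finset (List (Fin q)) :=
  (listFinset q n).filter (Avoid I1 I2)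

def headP1 (I1 I2 : Finset (Fin q)) : List (Fin q) → Prop
  | [] => False
  | a :: _ => a ∈ I1 ∧ a ∉ I2

open Classical in
noncomputable def AvP (I1 I2 : Finset (Fin q)) (n : ℕ) : Finset (List (Fin q)) :=
  (AvF I1 I2 n).filter (headP1 I1 I2)

variable (I1 I2 : Finset (Fin q))

open Classical

lemma mem_AvF (x : List (Fin q)) (n : ℕ) :
    x ∈ AvF I1 I2 n ↔ x.length = n ∧ Avoid I1 I2 x := by
  simp [AvF, mem_listFinset]

lemma avoid_cons (a : Fin q) (w : List (Fin q)) :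
    Avoid I1 I2 (a :: w) ↔
      a ∈ I1 ∪ I2 ∧ (∀ b ∈ w.head?, good I1 I2 a b) ∧ Avoid I1 I2 w := by
  unfold Avoid
  simp only [List.Chain']; rw [List.isChain_cons]
  constructor
  · rintro ⟨h1, h2, h3⟩
    exact ⟨h1 a (by simp), h2, fun b hb => h1 b (by simp [hb]), h3⟩
  · rintro ⟨h1, h2, h3, h4⟩
    refine ⟨?_, h2, h4⟩
    rintro b hb
    rcases List.mem_cons.mp hb with h | h
    · subst h; exact h1
    · exact h3 b h

lemma AvF_zero : AvF I1 I2 0 = {([] : List (Fin q))} := by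
  ext x
  simp only [mem_AvF, Finset.mem_singleton, List.length_eq_zero_iff]
  constructor
  · rintro ⟨h, -⟩; exact h
  · rintro rfl; exact ⟨rfl, by simp, by simp [List.Chain']⟩

lemma card_AvF_zero : (AvF I1 I2 0).card = 1 := by rw [AvF_zero]; simp

lemma card_AvP_zero : (AvP I1 I2 0).card = 0 := by
  rw [AvP, AvF_zero]
  rw [Finset.card_eq_zero]
  ext x
  simp only [Finset.mem_filter, Finset.mem_singleton, Finset.notMem_empty, iff_false, not_and]
  rintro rfl
  simp [headP1]

lemma cons_injective : Function.Injective (fun p : Fin q × List (Fin q) => p.1 :: p.2) := by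
  rintro ⟨a, w⟩ ⟨b, v⟩ h
  simp only [List.cons.injEq] at h
  exact Prod.ext h.1 h.2

lemma AvF_succ (n : ℕ) :
    AvF I1 I2 (n + 1) =
      (((I1 ∪ I2) ×ˢ AvF I1 I2 n).filter
        (fun p => ∀ b ∈ p.2.head?, good I1 I2 p.1 b)).image (fun p => p.1 :: p.2) := by
  ext x
  simp only [mem_AvF, Finset.mem_image, Finset.mem_filter, Finset.mem_product,
    Finset.mem_union]
  constructor
  · rintro ⟨hl, hav⟩
    match x, hl with
    | a :: w, hl =>
      rw [avoid_cons] at hav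
      obtain ⟨h1, h2, h3⟩ := hav
      refine ⟨(a, w), ⟨⟨by simpa using h1, ?_⟩, h2⟩, rfl⟩
      exact ⟨by simpa using hl, h3⟩
  · rintro ⟨⟨a, w⟩, ⟨⟨hU, hw⟩, hok⟩, rfl⟩
    refine ⟨by simp [hw.1], ?_⟩
    rw [avoid_cons]
    exact ⟨by simpa using hU, hok, hw.2⟩

lemma AvP_succ (n : ℕ) :
    AvP I1 I2 (n + 1) =
      (((I1 \ I2) ×ˢ AvF I1 I2 n)).image (fun p => p.1 :: p.2) := by
  rw [AvP, AvF_succ]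
  ext x
  simp only [Finset.mem_filter, Finset.mem_image, Finset.mem_filter, Finset.mem_product,
    Finset.mem_union, Finset.mem_sdiff]
  constructor
  · rintro ⟨⟨⟨a, w⟩, ⟨⟨hU, hw⟩, hok⟩, rfl⟩, hh⟩
    exact ⟨(a, w), ⟨hh, hw⟩, rfl⟩
  · rintro ⟨⟨a, w⟩, ⟨ha, hw⟩, rfl⟩
    refine ⟨⟨(a, w), ⟨⟨Or.inl ha.1, hw⟩, ?_⟩, rfl⟩, ha⟩
    intro b hb
    intro hcon
    exact hcon.1.2 ha.1

lemma card_AvP_succ (n : ℕ) :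
    (AvP I1 I2 (n + 1)).card = (I1 \ I2).card * (AvF I1 I2 n).card := by
  rw [AvP_succ, Finset.card_image_of_injective _ (cons_injective), Finset.card_product]

lemma filter_split (n : ℕ) :
    ((I1 ∪ I2) ×ˢ AvF I1 I2 n).filter (fun p => ∀ b ∈ p.2.head?, good I1 I2 p.1 b)
      = (I1 ×ˢ AvF I1 I2 n) ∪
        ((I2 \ I1) ×ˢ ((AvF I1 I2 n).filter (fun w => ¬ headP1 I1 I2 w))) := by
  ext ⟨a, w⟩
  simp only [Finset.mem_filter, Finset.mem_product, Finset.mem_union, Finset.mem_sdiff]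
  constructor
  · rintro ⟨⟨hU, hw⟩, hok⟩
    by_cases ha : a ∈ I1
    · exact Or.inl ⟨ha, hw⟩
    · have ha2 : a ∈ I2 := hU.resolve_left ha
      refine Or.inr ⟨⟨ha2, ha⟩, hw, ?_⟩
      match w with
      | [] => simp [headP1]
      | b :: v =>
        intro hh
        exact hok b rfl ⟨⟨ha2, ha⟩, hh⟩
  · rintro (⟨ha, hw⟩ | ⟨⟨ha2, ha⟩, hw, hh⟩)
    · refine ⟨⟨Or.inl ha, hw⟩, ?_⟩
      intro b hb hcon
      exact hcon.1.2 ha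
    · refine ⟨⟨Or.inr ha2, hw⟩, ?_⟩
      match w with
      | [] => intro b hb; simp at hb
      | b :: v =>
        intro c hc hcon
        rw [List.head?_cons, Option.mem_some_iff] at hc
        subst hc
        exact hh hcon.2

lemma card_AvF_succ (n : ℕ) :
    (AvF I1 I2 (n + 1)).card + (I2 \ I1).card * (AvP I1 I2 n).card
      = ((I1 ∩ I2).card + (I1 \ I2).card + (I2 \ I1).card) * (AvF I1 I2 n).card := by
  have hdisj : Disjoint (I1 ×ˢ AvF I1 I2 n)
      ((I2 \ I1) ×ˢ ((AvF I1 I2 n).filter (fun w => ¬ headP1 I1 I2 w))) := by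
    rw [Finset.disjoint_left]
    rintro ⟨a, w⟩ h1 h2
    rw [Finset.mem_product] at h1 h2
    rw [Finset.mem_sdiff] at h2
    exact h2.1.2 h1.1
  rw [AvF_succ, Finset.card_image_of_injective _ (cons_injective), filter_split,
    Finset.card_union_of_disjoint hdisj, Finset.card_product, Finset.card_product]
  have h1 : (I1 ∩ I2).card + (I1 \ I2).card = I1.card := Finset.card_inter_add_card_sdiff I1 I2
  have h2 : ((AvF I1 I2 n).filter (fun w => headP1 I1 I2 w)).card +
      ((AvF I1 I2 n).filter (fun w => ¬ headP1 I1 I2 w)).card = (AvF I1 I2 n).card :=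
    Finset.card_filter_add_card_filter_not _
  have h3 : (AvP I1 I2 n).card = ((AvF I1 I2 n).filter (fun w => headP1 I1 I2 w)).card := rfl
  rw [h3] at *
  have hle : ((AvF I1 I2 n).filter (fun w => ¬ headP1 I1 I2 w)).card ≤ (AvF I1 I2 n).card :=
    Finset.card_le_card (Finset.filter_subset _ _)
  nlinarith [h1, h2]

lemma co_cons_mem {J : Finset (Fin q)} {a : Fin q} (ha : a ∈ J) (u : List (Fin q)) :
    channelOutput J (a :: u) = a :: channelOutput J u := by
  simp [channelOutput, ha]

lemma co_cons_not {J : Finset (Fin q)} {a : Fin q} (ha : a ∉ J) (u : List (Fin q)) :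
    channelOutput J (a :: u) = channelOutput J u := by
  simp [channelOutput, ha]

lemma co_cons_cancel {J : Finset (Fin q)} {a : Fin q} {u v : List (Fin q)}
    (h : channelOutput J (a :: u) = channelOutput J (a :: v)) :
    channelOutput J u = channelOutput J v := by
  by_cases ha : a ∈ J
  · rw [co_cons_mem ha, co_cons_mem ha] at h
    exact List.tail_eq_of_cons_eq h
  · rwa [co_cons_not ha, co_cons_not ha] at h

lemma head_filter_K (v : List (Fin q)) :
    ∀ (_ : ∀ a ∈ v, a ∈ I1 ∪ I2) (_ : v.Chain' (good I1 I2))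
      (_ : ∀ b ∈ v.head?, b ∉ I1) (c : Fin q) (t : List (Fin q)),
      channelOutput I1 v = c :: t → c ∈ I2 := by
  induction v with
  | nil => intro _ _ _ c t h; simp [channelOutput] at h
  | cons e v ih =>
    intro hU hch hhead c t h
    have he : e ∉ I1 := hhead e rfl
    rw [co_cons_not he] at h
    match v, h with
    | f :: v', h =>
      by_cases hf : f ∈ I1
      · rw [co_cons_mem hf] at h
        have hc : c = f := (List.head_eq_of_cons_eq h).symm
        have hgood : good I1 I2 e f := (List.isChain_cons_cons.mp hch).1
        have he2 : e ∈ I2 := (Finset.mem_union.mp (hU e (by simp))).resolve_left he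
        subst hc
        by_contra hc2
        exact hgood ⟨⟨he2, he⟩, ⟨hf, hc2⟩⟩
      · exact ih (fun a ha => hU a (List.mem_cons_of_mem _ ha)) (List.IsChain.tail hch)
          (by intro b hb; rw [List.head?_cons, Option.mem_some_iff] at hb; subst hb; exact hf)
          c t h

lemma avoid_inj : ∀ (x y : List (Fin q)), Avoid I1 I2 x → Avoid I1 I2 y →
    channelOutput I1 x = channelOutput I1 y → channelOutput I2 x = channelOutput I2 y →
    x = y := by
  intro x
  induction x with
  | nil =>
    intro y _ hy h1 h2
    match y with
    | [] => rfl
    | b :: v =>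
      exfalso
      rcases Finset.mem_union.mp (hy.1 b (by simp)) with hb | hb
      · rw [co_cons_mem hb] at h1; simp [channelOutput] at h1
      · rw [co_cons_mem hb] at h2; simp [channelOutput] at h2
  | cons a u ih =>
    intro y hx hy h1 h2
    match y with
    | [] =>
      exfalso
      rcases Finset.mem_union.mp (hx.1 a (by simp)) with ha | ha
      · rw [co_cons_mem ha] at h1; simp [channelOutput] at h1
      · rw [co_cons_mem ha] at h2; simp [channelOutput] at h2
    | b :: v =>
      have hxu : Avoid I1 I2 u := ((avoid_cons I1 I2 a u).mp hx).2.2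
      have hyv : Avoid I1 I2 v := ((avoid_cons I1 I2 b v).mp hy).2.2
      by_cases ha : a ∈ I1 <;> by_cases hb : b ∈ I1
      · -- both in I1
        have hab : a = b := by
          rw [co_cons_mem ha, co_cons_mem hb] at h1
          exact List.head_eq_of_cons_eq h1
        subst hab
        have := ih v hxu hyv (co_cons_cancel h1) (co_cons_cancel h2)
        rw [this]
      · -- a ∈ I1, b ∉ I1 (b ∈ I2 \ I1)
        exfalso
        by_cases ha2 : a ∈ I2
        · have hb2 : b ∈ I2 := (Finset.mem_union.mp (hy.1 b (by simp))).resolve_left hb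
          rw [co_cons_mem ha2, co_cons_mem hb2] at h2
          exact hb (List.head_eq_of_cons_eq h2 ▸ ha)
        · -- a ∈ P1; use head_filter_K on y
          have : a ∈ I2 := by
            refine head_filter_K I1 I2 (b :: v) hy.1 hy.2 ?_ a (channelOutput I1 u) ?_
            · intro c hc; rw [List.head?_cons, Option.mem_some_iff] at hc; subst hc; exact hb
            · rw [← h1, co_cons_mem ha]
          exact ha2 this
      · -- a ∉ I1, b ∈ I1
        exfalso
        by_cases hb2 : b ∈ I2
        · have ha2 : a ∈ I2 := (Finset.mem_union.mp (hx.1 a (by simp))).resolve_left ha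
          rw [co_cons_mem ha2, co_cons_mem hb2] at h2
          exact ha (List.head_eq_of_cons_eq h2 ▸ hb)
        · have : b ∈ I2 := by
            refine head_filter_K I1 I2 (a :: u) hx.1 hx.2 ?_ b (channelOutput I1 v) ?_
            · intro c hc; rw [List.head?_cons, Option.mem_some_iff] at hc; subst hc; exact ha
            · rw [h1, co_cons_mem hb]
          exact hb2 this
      · -- both ∉ I1, both ∈ I2
        have ha2 : a ∈ I2 := (Finset.mem_union.mp (hx.1 a (by simp))).resolve_left ha
        have hb2 : b ∈ I2 := (Finset.mem_union.mp (hy.1 b (by simp))).resolve_left hb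
        have hab : a = b := by
          rw [co_cons_mem ha2, co_cons_mem hb2] at h2
          exact List.head_eq_of_cons_eq h2
        subst hab
        have := ih v hxu hyv (co_cons_cancel h1) (co_cons_cancel h2)
        rw [this]

section Norm

def ins (I1 I2 : Finset (Fin q)) (a : Fin q) : List (Fin q) → List (Fin q)
  | [] => [a]
  | b :: w => if (a ∈ I2 ∧ a ∉ I1) ∧ (b ∈ I1 ∧ b ∉ I2) then b :: ins I1 I2 a w
              else a :: b :: w

def norm (I1 I2 : Finset (Fin q)) : List (Fin q) → List (Fin q)
  | [] => []
  | a :: x => if a ∈ I1 ∪ I2 then ins I1 I2 a (norm I1 I2 x) else norm I1 I2 x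

lemma length_ins (a : Fin q) (w : List (Fin q)) :
    (ins I1 I2 a w).length = w.length + 1 := by
  induction w with
  | nil => rfl
  | cons b w ih =>
    rw [ins]
    split
    · simp [ih]
    · simp

lemma length_norm (x : List (Fin q)) : (norm I1 I2 x).length ≤ x.length := by
  induction x with
  | nil => simp [norm]
  | cons a x ih =>
    rw [norm]
    split
    · rw [length_ins]; simpa using ih
    · simp; omega

lemma mem_ins {c a : Fin q} {w : List (Fin q)} (h : c ∈ ins I1 I2 a w) :
    c = a ∨ c ∈ w := by
  induction w with
  | nil => simp [ins] at h; exact Or.inl h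
  | cons b w ih =>
    rw [ins] at h
    split at h
    · rcases List.mem_cons.mp h with h | h
      · exact Or.inr (h ▸ List.mem_cons_self (a := b) (l := w))
      · rcases ih h with h | h
        · exact Or.inl h
        · exact Or.inr (List.mem_cons_of_mem _ h)
    · simpa using h

lemma allU_norm (x : List (Fin q)) : ∀ c ∈ norm I1 I2 x, c ∈ I1 ∪ I2 := by
  induction x with
  | nil => simp [norm]
  | cons a x ih =>
    rw [norm]
    split
    · intro c hc
      rcases mem_ins I1 I2 hc with rfl | hc
      · assumption
      · exact ih c hc
    · exact ih

lemma co_ins_1 (a : Fin q) (w : List (Fin q)) :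
    channelOutput I1 (ins I1 I2 a w) = channelOutput I1 (a :: w) := by
  induction w with
  | nil => rfl
  | cons b w ih =>
    rw [ins]
    split
    · rename_i hcond
      obtain ⟨⟨ha2, ha1⟩, hb1, hb2⟩ := hcond
      rw [co_cons_mem hb1, ih, co_cons_not ha1, co_cons_not ha1, co_cons_mem hb1]
    · rfl

lemma co_ins_2 (a : Fin q) (w : List (Fin q)) :
    channelOutput I2 (ins I1 I2 a w) = channelOutput I2 (a :: w) := by
  induction w with
  | nil => rfl
  | cons b w ih =>
    rw [ins]
    split
    · rename_i hcond
      obtain ⟨⟨ha2, ha1⟩, hb1, hb2⟩ := hcond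
      rw [co_cons_not hb2, ih, co_cons_mem ha2, co_cons_mem ha2, co_cons_not hb2]
    · rfl

lemma co_norm_1 (x : List (Fin q)) :
    channelOutput I1 (norm I1 I2 x) = channelOutput I1 x := by
  induction x with
  | nil => rfl
  | cons a x ih =>
    rw [norm]
    split
    · rw [co_ins_1]
      by_cases ha : a ∈ I1
      · rw [co_cons_mem ha, co_cons_mem ha, ih]
      · rw [co_cons_not ha, co_cons_not ha, ih]
    · rename_i hU
      have ha : a ∉ I1 := fun h => hU (Finset.mem_union_left _ h)
      rw [co_cons_not ha, ih]

lemma co_norm_2 (x : List (Fin q)) :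
    channelOutput I2 (norm I1 I2 x) = channelOutput I2 x := by
  induction x with
  | nil => rfl
  | cons a x ih =>
    rw [norm]
    split
    · rw [co_ins_2]
      by_cases ha : a ∈ I2
      · rw [co_cons_mem ha, co_cons_mem ha, ih]
      · rw [co_cons_not ha, co_cons_not ha, ih]
    · rename_i hU
      have ha : a ∉ I2 := fun h => hU (Finset.mem_union_right _ h)
      rw [co_cons_not ha, ih]

lemma head_ins (a : Fin q) (w : List (Fin q)) :
    (ins I1 I2 a w).head? = some a ∨ (ins I1 I2 a w).head? = w.head? := by
  match w with
  | [] => exact Or.inl rfl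
  | b :: w' =>
    rw [ins]
    split
    · exact Or.inr rfl
    · exact Or.inl rfl

lemma chain_ins (a : Fin q) (w : List (Fin q)) (hw : w.Chain' (good I1 I2)) :
    (ins I1 I2 a w).Chain' (good I1 I2) := by
  induction w with
  | nil => simp [ins, List.Chain']
  | cons b w' ih =>
    rw [ins]
    split
    · rename_i hcond
      obtain ⟨⟨ha2, ha1⟩, hb1, hb2⟩ := hcond
      simp only [List.Chain']; rw [List.isChain_cons]
      refine ⟨?_, ih (List.IsChain.tail hw)⟩
      intro c hc
      rcases head_ins I1 I2 a w' with he | he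
      · rw [he, Option.mem_some_iff] at hc
        subst hc
        intro hcon
        exact hcon.1.2 hb1
      · rw [he] at hc
        exact (List.isChain_cons.mp hw).1 c hc
    · rename_i hcond
      simp only [List.Chain']; rw [List.isChain_cons_cons]
      exact ⟨fun h => hcond h, hw⟩

lemma chain_norm (x : List (Fin q)) : (norm I1 I2 x).Chain' (good I1 I2) := by
  induction x with
  | nil => simp [norm, List.Chain']
  | cons a x ih =>
    rw [norm]
    split
    · exact chain_ins I1 I2 a _ ih
    · exact ih

lemma avoid_norm (x : List (Fin q)) : Avoid I1 I2 (norm I1 I2 x) :=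
  ⟨allU_norm I1 I2 x, chain_norm I1 I2 x⟩

end Norm

noncomputable def outF (I1 I2 : Finset (Fin q)) (x : List (Fin q)) : Fin 2 → List (Fin q) :=
  fun i => channelOutput (![I1, I2] i) x

lemma outF_zero (x : List (Fin q)) : outF I1 I2 x 0 = channelOutput I1 x := rfl
lemma outF_one (x : List (Fin q)) : outF I1 I2 x 1 = channelOutput I2 x := rfl

open Classical in
noncomputable def AFn (I1 I2 : Finset (Fin q)) (n : ℕ) : Finset (Fin 2 → List (Fin q)) :=
  (listFinset q n).image (outF I1 I2)

lemma channelOutputs_eq (n : ℕ) :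
    channelOutputs ![I1, I2] n = ↑(AFn I1 I2 n) := by
  ext y
  simp only [channelOutputs, Set.mem_setOf_eq, AFn, Finset.coe_image, Set.mem_image,
    Finset.mem_coe, mem_listFinset]
  constructor
  · rintro ⟨x, hx, rfl⟩; exact ⟨x, hx, rfl⟩
  · rintro ⟨x, hx, rfl⟩; exact ⟨x, hx, rfl⟩

lemma ncard_eq (n : ℕ) :
    (channelOutputs ![I1, I2] n).ncard = (AFn I1 I2 n).card := by
  rw [channelOutputs_eq, Set.ncard_coe_finset]

lemma lower_bound (n : ℕ) : (AvF I1 I2 n).card ≤ (AFn I1 I2 n).card := by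
  classical
  have hsub : (AvF I1 I2 n).image (outF I1 I2) ⊆ AFn I1 I2 n :=
    Finset.image_subset_image (Finset.filter_subset _ _)
  have hinj : Set.InjOn (outF I1 I2) ↑(AvF I1 I2 n) := by
    intro x hx y hy h
    rw [Finset.mem_coe, mem_AvF] at hx hy
    exact avoid_inj I1 I2 x y hx.2 hy.2 (congrFun h 0) (congrFun h 1)
  calc (AvF I1 I2 n).card = ((AvF I1 I2 n).image (outF I1 I2)).card :=
        (Finset.card_image_of_injOn hinj).symm
    _ ≤ (AFn I1 I2 n).card := Finset.card_le_card hsub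

lemma upper_bound (n : ℕ) :
    (AFn I1 I2 n).card ≤ ∑ m ∈ Finset.range (n + 1), (AvF I1 I2 m).card := by
  classical
  have hsub : AFn I1 I2 n ⊆
      (Finset.range (n + 1)).biUnion (fun m => (AvF I1 I2 m).image (outF I1 I2)) := by
    intro y hy
    rw [AFn, Finset.mem_image] at hy
    obtain ⟨x, hx, rfl⟩ := hy
    rw [mem_listFinset] at hx
    rw [Finset.mem_biUnion]
    refine ⟨(norm I1 I2 x).length, ?_, ?_⟩
    · rw [Finset.mem_range]
      have := length_norm I1 I2 x
      omega
    · rw [Finset.mem_image]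
      refine ⟨norm I1 I2 x, ?_, ?_⟩
      · rw [mem_AvF]; exact ⟨rfl, avoid_norm I1 I2 x⟩
      · funext i
        fin_cases i
        · exact co_norm_1 I1 I2 x
        · exact co_norm_2 I1 I2 x
  calc (AFn I1 I2 n).card
      ≤ ((Finset.range (n + 1)).biUnion (fun m => (AvF I1 I2 m).image (outF I1 I2))).card :=
        Finset.card_le_card hsub
    _ ≤ ∑ m ∈ Finset.range (n + 1), ((AvF I1 I2 m).image (outF I1 I2)).card :=
        Finset.card_biUnion_le
    _ ≤ ∑ m ∈ Finset.range (n + 1), (AvF I1 I2 m).card :=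
        Finset.sum_le_sum fun m _ => Finset.card_image_le

/-- real bounds for the recursively-defined counting sequence -/
lemma seq_bounds (k p1 p2 : ℕ) (lam mu : ℝ)
    (hmu0 : 0 ≤ mu) (hmulam : mu ≤ lam) (hlam1 : 1 ≤ lam)
    (hsum : lam + mu = (k : ℝ) + p1 + p2) (hpr : lam * mu = (p1 : ℝ) * p2)
    (c d : ℕ → ℕ) (hc0 : c 0 = 1) (hd0 : d 0 = 0)
    (hd : ∀ n, d (n + 1) = p1 * c n)
    (hc : ∀ n, c (n + 1) + p2 * d n = (k + p1 + p2) * c n) :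
    ∀ n, lam ^ n ≤ (c n : ℝ) ∧ (c n : ℝ) ≤ (n + 1) * lam ^ n := by
  have hc1 : (c 1 : ℝ) = lam + mu := by
    have h := hc 0
    rw [hd0, hc0] at h
    have h' : c 1 = k + p1 + p2 := by simpa using h
    rw [hsum]
    exact_mod_cast congrArg (Nat.cast (R := ℝ)) h' 
  have hrec : ∀ n, (c (n + 2) : ℝ) + (p1 : ℝ) * p2 * c n = ((k : ℝ) + p1 + p2) * c (n + 1) := by
    intro n
    have h1 := hc (n + 1)
    rw [hd n] at h1
    have h2 := congrArg (Nat.cast (R := ℝ)) h1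
    push_cast at h2
    linarith
  have hR : ∀ n, (c (n + 1) : ℝ) = lam * c n + mu ^ (n + 1) := by
    intro n
    induction n with
    | zero => rw [hc1, hc0]; push_cast; ring
    | succ m ih =>
      have h2 := hrec m
      rw [← hsum, ← hpr] at h2
      have : (c (m + 2) : ℝ) = lam * c (m + 1) + mu * (c (m + 1) - lam * c m) := by
        linarith
      rw [this, ih]
      ring
  intro n
  induction n with
  | zero => rw [hc0]; norm_num
  | succ m ih =>
    obtain ⟨ihl, ihu⟩ := ih
    have hmupow : mu ^ (m + 1) ≤ lam ^ (m + 1) := pow_le_pow_left₀ hmu0 hmulam (m + 1)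
    have hmupow0 : 0 ≤ mu ^ (m + 1) := pow_nonneg hmu0 _
    have hlp : (0:ℝ) ≤ lam ^ m := pow_nonneg (by linarith) _
    constructor
    · rw [hR m]
      calc lam ^ (m + 1) = lam * lam ^ m := by ring
        _ ≤ lam * c m := by
            apply mul_le_mul_of_nonneg_left ihl (by linarith)
        _ ≤ lam * c m + mu ^ (m + 1) := by linarith
    · rw [hR m]
      have h1 : lam * (c m : ℝ) ≤ lam * (((m : ℝ) + 1) * lam ^ m) :=
        mul_le_mul_of_nonneg_left ihu (by linarith)
      calc lam * (c m : ℝ) + mu ^ (m + 1) ≤ lam * (((m : ℝ) + 1) * lam ^ m) + lam ^ (m + 1) := by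
            linarith
        _ = ((m : ℝ) + 2) * lam ^ (m + 1) := by rw [pow_succ]; ring
        _ = ((m + 1 : ℕ) + 1 : ℝ) * lam ^ (m + 1) := by push_cast; ring
      
/-- abstract limsup computation -/
lemma limsup_calc (q : ℕ) (hq : 2 ≤ q) (N : ℕ → ℕ) (lam : ℝ) (hlam : 1 < lam)
    (hlow : ∀ n, lam ^ n ≤ (N n : ℝ))
    (hupp : ∀ n, (N n : ℝ) ≤ ((n : ℝ) + 1) ^ 2 * lam ^ n) :
    Filter.atTop.limsup (fun n : ℕ => Real.logb q ((N n : ℝ)) / (n : ℝ)) = Real.logb q lam := by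
  have hqR : (1 : ℝ) < (q : ℝ) := by exact_mod_cast hq.trans_lt' one_lt_two
  set f : ℕ → ℝ := fun n : ℕ => Real.logb q ((N n : ℝ)) / (n : ℝ) with hf
  set g : ℕ → ℝ := fun n : ℕ => Real.logb q lam + 2 * Real.logb q ((n : ℝ) + 1) / n with hg
  have hlampow : ∀ n : ℕ, (0:ℝ) < lam ^ n := fun n => pow_pos (by linarith) n
  -- f n ≥ logb lam eventually
  have hlb : ∀ᶠ n in Filter.atTop, Real.logb q lam ≤ f n := by
    filter_upwards [Filter.eventually_ge_atTop 1] with n hn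
    have h1 : Real.logb q (lam ^ n) ≤ Real.logb q (N n) :=
      Real.logb_le_logb_of_le hqR (hlampow n) (hlow n)
    rw [Real.logb_pow] at h1
    rw [hf]
    dsimp only
    rw [le_div_iff₀ (by positivity : (0:ℝ) < (n:ℝ))]
    linarith
  -- f n ≤ g n eventually
  have hub : ∀ᶠ n in Filter.atTop, f n ≤ g n := by
    filter_upwards [Filter.eventually_ge_atTop 1] with n hn
    have hNpos : (0:ℝ) < (N n : ℝ) := lt_of_lt_of_le (hlampow n) (hlow n)
    have h1 : Real.logb q (N n) ≤ Real.logb q (((n : ℝ) + 1) ^ 2 * lam ^ n) :=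
      Real.logb_le_logb_of_le hqR hNpos (hupp n)
    rw [Real.logb_mul (by positivity) (hlampow n).ne', Real.logb_pow, Real.logb_pow] at h1
    rw [hf, hg]
    rw [div_le_iff₀ (by positivity : (0:ℝ) < (n:ℝ))]
    have hnn : (0:ℝ) < (n:ℝ) := by positivity
    calc Real.logb q (N n) ≤ 2 * Real.logb q ((n:ℝ) + 1) + n * Real.logb q lam := by
          push_cast at h1 ⊢; linarith
      _ = (Real.logb q lam + 2 * Real.logb q ((n : ℝ) + 1) / n) * n := by
          field_simp
          ring
  -- g tends to logb lam
  have hgtend : Filter.Tendsto g Filter.atTop (nhds (Real.logb q lam)) := by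
    rw [hg]
    have h0 : Filter.Tendsto (fun n : ℕ => Real.logb q ((n : ℝ) + 1) / n) Filter.atTop (nhds 0) := by
      have hlog : Filter.Tendsto (fun n : ℕ => Real.log ((n:ℝ) + 1) / ((n:ℝ) + 1))
          Filter.atTop (nhds 0) := by
        apply Asymptotics.IsLittleO.tendsto_div_nhds_zero
        have hcomp : Filter.Tendsto (fun n : ℕ => (n : ℝ) + 1) Filter.atTop Filter.atTop :=
          Filter.tendsto_atTop_add_const_right _ _ tendsto_natCast_atTop_atTop
        simpa [Function.comp_def] using Real.isLittleO_log_id_atTop.comp_tendsto hcomp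
      have hrat : Filter.Tendsto (fun n : ℕ => ((n:ℝ) + 1) / n) Filter.atTop (nhds 1) := by
        have : ∀ᶠ n : ℕ in Filter.atTop, 1 + 1 / (n:ℝ) = ((n:ℝ) + 1) / n := by
          filter_upwards [Filter.eventually_ge_atTop 1] with n hn
          have : (0:ℝ) < (n:ℝ) := by positivity
          field_simp
        refine Filter.Tendsto.congr' this ?_
        have := tendsto_one_div_atTop_nhds_zero_nat (𝕜 := ℝ)
        have h2 := this.const_add (1:ℝ)
        simpa using h2
      have := hlog.mul hrat
      simp only [mul_one] at this
      refine Filter.Tendsto.congr' ?_ (by simpa using this.const_mul (1 / Real.log q))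
      filter_upwards [Filter.eventually_ge_atTop 1] with n hn
      have hn0 : ((n:ℝ) + 1) ≠ 0 := by positivity
      rw [Real.logb]
      field_simp
    have := (h0.const_mul 2).const_add (Real.logb q lam)
    simpa [mul_div_assoc] using this
  have hgbdd : Filter.IsBoundedUnder (· ≤ ·) Filter.atTop g := hgtend.isBoundedUnder_le
  have hfbdd : Filter.IsBoundedUnder (· ≤ ·) Filter.atTop f := hgbdd.mono_le hub
  have hfcobdd : Filter.IsCoboundedUnder (· ≤ ·) Filter.atTop f := by
    have : Filter.IsBoundedUnder (· ≥ ·) Filter.atTop f :=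
      ⟨Real.logb q lam, by simpa using hlb⟩
    exact this.isCoboundedUnder_flip
  apply le_antisymm
  · calc Filter.atTop.limsup f ≤ Filter.atTop.limsup g :=
        Filter.limsup_le_limsup hub hfcobdd hgbdd
      _ = Real.logb q lam := hgtend.limsup_eq
  · calc Real.logb q lam = Filter.atTop.limsup (fun _ : ℕ => Real.logb q lam) :=
        (Filter.limsup_const _).symm
      _ ≤ Filter.atTop.limsup f := by
        have hb : Filter.IsBoundedUnder (· ≥ ·) Filter.atTop
            (fun _ : ℕ => Real.logb q lam) := ⟨Real.logb q lam, by simp⟩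
        exact Filter.limsup_le_limsup hlb hb.isCoboundedUnder_flip hfbdd

end CapTwo


set_option maxHeartbeats 2000000 in
/-- the capacity of two intersecting coloring channels. -/
theorem capacity_of_two_sets (q k p1 p2 : ℕ) (hq : 2 ≤ q)
    (hk : 1 ≤ k) (hp1 : 1 ≤ p1) (hp2 : 1 ≤ p2)
    (I1 I2 : Finset (Fin q))
    (hK : (I1 ∩ I2).card = k) (hP1 : (I1 \ I2).card = p1) (hP2 : (I2 \ I1).card = p2)
    (M : ℝ → ℝ → ℝ)
    (hM : ∀ x1 x2 : ℝ, M x1 x2 =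
      (1 - x1 - x2) * Real.logb q k + x1 * Real.logb q p1 + x2 * Real.logb q p2 +
      (1 - x2) * binH (x1 / (1 - x2)) * Real.logb q 2 +
      (1 - x1) * binH (x2 / (1 - x1)) * Real.logb q 2)
    (x1s x2s : ℝ)
    (hx1 : x1s = 1 / 2 - ((k : ℝ) + p2 - p1) /
      (2 * Real.sqrt (((k : ℝ) + p1 + p2) ^ 2 - 4 * p1 * p2)))
    (hx2 : x2s = 1 / 2 - ((k : ℝ) + p1 - p2) /
      (2 * Real.sqrt (((k : ℝ) + p1 + p2) ^ 2 - 4 * p1 * p2))) :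
    capacity ![I1, I2] = M x1s x2s := by
  have hkR : (1:ℝ) ≤ (k:ℝ) := by exact_mod_cast hk
  have hp1R : (1:ℝ) ≤ (p1:ℝ) := by exact_mod_cast hp1
  have hp2R : (1:ℝ) ≤ (p2:ℝ) := by exact_mod_cast hp2
  rw [hM x1s x2s, M_val q (k:ℝ) (p1:ℝ) (p2:ℝ) hkR hp1R hp2R x1s x2s hx1 hx2]
  -- abbreviations
  set s : ℝ := (k:ℝ) + (p1:ℝ) + (p2:ℝ) with hs
  have hin : (0:ℝ) < s ^ 2 - 4 * p1 * p2 := by nlinarith [sq_nonneg ((p1:ℝ) - (p2:ℝ))]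
  set D : ℝ := Real.sqrt (s ^ 2 - 4 * p1 * p2) with hDdef
  have hD2 : D ^ 2 = s ^ 2 - 4 * p1 * p2 := Real.sq_sqrt hin.le
  have hDpos : 0 < D := Real.sqrt_pos.mpr hin
  have hDs : D ≤ s := by nlinarith [hD2, hDpos]
  set lam : ℝ := (s + D) / 2 with hlam
  set mu : ℝ := (s - D) / 2 with hmu
  have hlam1 : 1 < lam := by rw [hlam]; nlinarith [hDpos]
  have hmu0 : 0 ≤ mu := by rw [hmu]; linarith [hDs]
  have hmulam : mu ≤ lam := by rw [hmu, hlam]; linarith [hDpos]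
  have hsumlm : lam + mu = s := by rw [hlam, hmu]; ring
  have hprlm : lam * mu = (p1:ℝ) * p2 := by
    rw [hlam, hmu]
    nlinarith [hD2]
  -- the counting sequences
  have hseq := CapTwo.seq_bounds k p1 p2 lam mu hmu0 hmulam hlam1.le
    (by rw [hsumlm, hs]) hprlm
    (fun n => (CapTwo.AvF I1 I2 n).card) (fun n => (CapTwo.AvP I1 I2 n).card)
    (CapTwo.card_AvF_zero I1 I2) (CapTwo.card_AvP_zero I1 I2)
    (fun n => by
      show (CapTwo.AvP I1 I2 (n + 1)).card = p1 * (CapTwo.AvF I1 I2 n).card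
      rw [CapTwo.card_AvP_succ I1 I2 n, hP1])
    (fun n => by
      show (CapTwo.AvF I1 I2 (n + 1)).card + p2 * (CapTwo.AvP I1 I2 n).card
        = (k + p1 + p2) * (CapTwo.AvF I1 I2 n).card
      rw [← hK, ← hP1, ← hP2, CapTwo.card_AvF_succ I1 I2 n])
  -- bounds on ncard
  have hlow : ∀ n : ℕ, lam ^ n ≤ (((CapTwo.AFn I1 I2 n).card : ℕ) : ℝ) := by
    intro n
    calc lam ^ n ≤ ((CapTwo.AvF I1 I2 n).card : ℝ) := (hseq n).1
      _ ≤ ((CapTwo.AFn I1 I2 n).card : ℝ) := by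
          exact_mod_cast CapTwo.lower_bound I1 I2 n
  have hupp : ∀ n : ℕ, (((CapTwo.AFn I1 I2 n).card : ℕ) : ℝ) ≤ ((n:ℝ) + 1) ^ 2 * lam ^ n := by
    intro n
    have h1 : ((CapTwo.AFn I1 I2 n).card : ℝ) ≤
        ∑ m ∈ Finset.range (n + 1), ((CapTwo.AvF I1 I2 m).card : ℝ) := by
      rw [← Nat.cast_sum]
      exact_mod_cast CapTwo.upper_bound I1 I2 n
    have h2 : ∑ m ∈ Finset.range (n + 1), ((CapTwo.AvF I1 I2 m).card : ℝ) ≤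
        ∑ m ∈ Finset.range (n + 1), ((n:ℝ) + 1) * lam ^ n := by
      apply Finset.sum_le_sum
      intro m hm
      rw [Finset.mem_range] at hm
      have hmn : m ≤ n := by omega
      calc ((CapTwo.AvF I1 I2 m).card : ℝ) ≤ ((m:ℝ) + 1) * lam ^ m := (hseq m).2
        _ ≤ ((n:ℝ) + 1) * lam ^ n := by
            apply mul_le_mul
            · have : (m:ℝ) ≤ (n:ℝ) := by exact_mod_cast hmn
              linarith
            · exact pow_le_pow_right₀ (by linarith) hmn
            · positivity
            · positivity
    have h3 : ∑ m ∈ Finset.range (n + 1), ((n:ℝ) + 1) * lam ^ n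
        = ((n:ℝ) + 1) ^ 2 * lam ^ n := by
      rw [Finset.sum_const, Finset.card_range, nsmul_eq_mul]
      push_cast
      ring
    linarith
  -- compute the limsup
  unfold capacity
  have hfun : (fun n : ℕ => Real.logb q ((channelOutputs ![I1, I2] n).ncard : ℝ) / (n : ℝ))
      = fun n : ℕ => Real.logb q (((CapTwo.AFn I1 I2 n).card : ℕ) : ℝ) / (n : ℝ) := by
    funext n
    rw [CapTwo.ncard_eq I1 I2 n]
  rw [hfun]
  exact CapTwo.limsup_calc q hq (fun n => (CapTwo.AFn I1 I2 n).card) lam hlam1 hlow hupp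
end

section
/- Fix integers k, p_1, p_2 ≥ 1 and q ≥ 2, and define M(x_1,x_2) = (1−x_1−x_2) log_q k + x_1 log_q p_1 + x_2 log_q p_2 + (1−x_2) H( x_1/(1−x_2) ) log_q 2 + (1−x_1) H( x_2/(1−x_1) ) log_q 2. Then M is strictly concave on the open region { (x_1,x_2) : x_1 > 0, x_2 > 0, x_1 + x_2 < 1 }; equivalently, its Hessian matrix is negative definite at every point of this region. -/
section Aux

open Real

private lemma key_ineq (z1 z2 s d1 d2 : ℝ) (h1 : 0 < z1) (h2 : 0 < z2) (hs : 0 < s)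
    (hd : d1 ≠ 0 ∨ d2 ≠ 0) :
    d1 ^ 2 / (z2 + s) + d2 ^ 2 / (z1 + s)
      < d1 ^ 2 / z1 + d2 ^ 2 / z2 + 2 * (d1 + d2) ^ 2 / s := by
  have h1s : 0 < z1 + s := by linarith
  have h2s : 0 < z2 + s := by linarith
  have hA : d2 ^ 2 / (z1 + s) + (d1 * (z1 + s) + z1 * d2) ^ 2 / (z1 * s * (z1 + s))
      = d1 ^ 2 / z1 + (d1 + d2) ^ 2 / s := by
    field_simp
    ring
  have hB : d1 ^ 2 / (z2 + s) + (d2 * (z2 + s) + z2 * d1) ^ 2 / (z2 * s * (z2 + s))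
      = d2 ^ 2 / z2 + (d1 + d2) ^ 2 / s := by
    field_simp
    ring
  have hposA : 0 ≤ (d1 * (z1 + s) + z1 * d2) ^ 2 / (z1 * s * (z1 + s)) := by positivity
  have hposB : 0 ≤ (d2 * (z2 + s) + z2 * d1) ^ 2 / (z2 * s * (z2 + s)) := by positivity
  have hstrict : 0 < (d1 * (z1 + s) + z1 * d2) ^ 2 / (z1 * s * (z1 + s))
      ∨ 0 < (d2 * (z2 + s) + z2 * d1) ^ 2 / (z2 * s * (z2 + s)) := by
    rcases eq_or_ne (d1 * (z1 + s) + z1 * d2) 0 with e1 | e1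
    · rcases eq_or_ne (d2 * (z2 + s) + z2 * d1) 0 with e2 | e2
      · exfalso
        have hz1 : d1 * (s * (z1 + z2 + s)) = 0 := by linear_combination (z2 + s) * e1 - z1 * e2
        have hz2 : d2 * (s * (z1 + z2 + s)) = 0 := by linear_combination (z1 + s) * e2 - z2 * e1
        have hne : s * (z1 + z2 + s) ≠ 0 := by positivity
        rcases hd with h | h
        · exact h (by rcases mul_eq_zero.mp hz1 with h' | h' <;> tauto)
        · exact h (by rcases mul_eq_zero.mp hz2 with h' | h' <;> tauto)
      · right; positivity
    · left; positivity
  have h2s' : 2 * (d1 + d2) ^ 2 / s = (d1 + d2) ^ 2 / s + (d1 + d2) ^ 2 / s := by ring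
  rcases hstrict with h | h <;> linarith

private lemma pers_binH (U P : ℝ) (hU : 0 < U) (hUP : U < P) :
    P * binH (U / P) * Real.log 2 =
      Real.negMulLog U + Real.negMulLog (P - U) - Real.negMulLog P := by
  have hP : 0 < P := hU.trans hUP
  have hPU : 0 < P - U := sub_pos.mpr hUP
  have h2 : Real.log 2 ≠ 0 := (Real.log_pos one_lt_two).ne'
  have h1 : (1 : ℝ) - U / P = (P - U) / P := by field_simp
  rw [binH, h1, Real.logb, Real.logb, Real.log_div hU.ne' hP.ne',
    Real.log_div hPU.ne' hP.ne']
  simp only [Real.negMulLog]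
  field_simp
  ring

/-- Auxiliary: the objective along an affine line, in `negMulLog` form. -/
private noncomputable def phiAux (Lk L1 L2 c A1 B1 A2 B2 : ℝ) (t : ℝ) : ℝ :=
  (1 - (A1 + t * B1) - (A2 + t * B2)) * Lk + (A1 + t * B1) * L1 + (A2 + t * B2) * L2 +
    c * (Real.negMulLog (A1 + t * B1) + Real.negMulLog (A2 + t * B2)
      + 2 * Real.negMulLog (1 - (A1 + t * B1) - (A2 + t * B2))
      - Real.negMulLog (1 - (A1 + t * B1)) - Real.negMulLog (1 - (A2 + t * B2)))

private lemma phiAux_strictConcaveOn (Lk L1 L2 c A1 B1 A2 B2 : ℝ) (hc : 0 < c)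
    (hB : B1 ≠ 0 ∨ B2 ≠ 0)
    (hmem : ∀ t ∈ Set.Icc (0 : ℝ) 1,
      0 < A1 + t * B1 ∧ 0 < A2 + t * B2 ∧ (A1 + t * B1) + (A2 + t * B2) < 1) :
    StrictConcaveOn ℝ (Set.Icc (0 : ℝ) 1) (phiAux Lk L1 L2 c A1 B1 A2 B2) := by
  classical
  set φ' : ℝ → ℝ := fun s =>
    (0 - B1 - B2) * Lk + B1 * L1 + B2 * L2 +
      c * ((-Real.log (A1 + s * B1) - 1) * B1 + (-Real.log (A2 + s * B2) - 1) * B2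
        + 2 * ((-Real.log (1 - (A1 + s * B1) - (A2 + s * B2)) - 1) * (0 - B1 - B2))
        - (-Real.log (1 - (A1 + s * B1)) - 1) * (0 - B1)
        - (-Real.log (1 - (A2 + s * B2)) - 1) * (0 - B2)) with hφ'def
  have hder1 : ∀ s ∈ Set.Ioo (0 : ℝ) 1,
      HasDerivAt (phiAux Lk L1 L2 c A1 B1 A2 B2) (φ' s) s := by
    intro s hs
    obtain ⟨q1, q2, q3⟩ := hmem s (Set.Ioo_subset_Icc_self hs)
    have q4 : 0 < 1 - (A1 + s * B1) - (A2 + s * B2) := by linarith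
    have q5 : 0 < 1 - (A1 + s * B1) := by linarith
    have q6 : 0 < 1 - (A2 + s * B2) := by linarith
    have l1 : HasDerivAt (fun t : ℝ => A1 + t * B1) B1 s :=
      (hasDerivAt_mul_const B1).const_add A1
    have l2 : HasDerivAt (fun t : ℝ => A2 + t * B2) B2 s :=
      (hasDerivAt_mul_const B2).const_add A2
    have l3 : HasDerivAt (fun t : ℝ => 1 - (A1 + t * B1) - (A2 + t * B2)) (0 - B1 - B2) s :=
      ((hasDerivAt_const s (1 : ℝ)).sub l1).sub l2
    have l4 : HasDerivAt (fun t : ℝ => 1 - (A1 + t * B1)) (0 - B1) s :=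
      (hasDerivAt_const s (1 : ℝ)).sub l1
    have l5 : HasDerivAt (fun t : ℝ => 1 - (A2 + t * B2)) (0 - B2) s :=
      (hasDerivAt_const s (1 : ℝ)).sub l2
    have n1 : HasDerivAt (fun t : ℝ => Real.negMulLog (A1 + t * B1))
        ((-Real.log (A1 + s * B1) - 1) * B1) s := by
      simpa [Function.comp_def] using (Real.hasDerivAt_negMulLog q1.ne').comp s l1
    have n2 : HasDerivAt (fun t : ℝ => Real.negMulLog (A2 + t * B2))
        ((-Real.log (A2 + s * B2) - 1) * B2) s := by
      simpa [Function.comp_def] using (Real.hasDerivAt_negMulLog q2.ne').comp s l2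
    have n3 : HasDerivAt (fun t : ℝ => Real.negMulLog (1 - (A1 + t * B1) - (A2 + t * B2)))
        ((-Real.log (1 - (A1 + s * B1) - (A2 + s * B2)) - 1) * (0 - B1 - B2)) s := by
      simpa [Function.comp_def] using (Real.hasDerivAt_negMulLog q4.ne').comp s l3
    have n4 : HasDerivAt (fun t : ℝ => Real.negMulLog (1 - (A1 + t * B1)))
        ((-Real.log (1 - (A1 + s * B1)) - 1) * (0 - B1)) s := by
      simpa [Function.comp_def] using (Real.hasDerivAt_negMulLog q5.ne').comp s l4
    have n5 : HasDerivAt (fun t : ℝ => Real.negMulLog (1 - (A2 + t * B2)))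
        ((-Real.log (1 - (A2 + s * B2)) - 1) * (0 - B2)) s := by
      simpa [Function.comp_def] using (Real.hasDerivAt_negMulLog q6.ne').comp s l5
    rw [hφ'def]
    unfold phiAux
    exact (((l3.mul_const Lk).add (l1.mul_const L1)).add (l2.mul_const L2)).add
      (((((n1.add n2).add (n3.const_mul 2)).sub n4).sub n5).const_mul c)
  have hder2 : ∀ t ∈ Set.Ioo (0 : ℝ) 1,
      HasDerivAt φ'
        (0 + 0 + 0 +
          c * ((-((A1 + t * B1)⁻¹ * B1)) * B1 + (-((A2 + t * B2)⁻¹ * B2)) * B2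
            + 2 * ((-((1 - (A1 + t * B1) - (A2 + t * B2))⁻¹ * (0 - B1 - B2))) * (0 - B1 - B2))
            - (-((1 - (A1 + t * B1))⁻¹ * (0 - B1))) * (0 - B1)
            - (-((1 - (A2 + t * B2))⁻¹ * (0 - B2))) * (0 - B2))) t := by
    intro t ht
    obtain ⟨q1, q2, q3⟩ := hmem t (Set.Ioo_subset_Icc_self ht)
    have q4 : 0 < 1 - (A1 + t * B1) - (A2 + t * B2) := by linarith
    have q5 : 0 < 1 - (A1 + t * B1) := by linarith
    have q6 : 0 < 1 - (A2 + t * B2) := by linarith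
    have l1 : HasDerivAt (fun u : ℝ => A1 + u * B1) B1 t :=
      (hasDerivAt_mul_const B1).const_add A1
    have l2 : HasDerivAt (fun u : ℝ => A2 + u * B2) B2 t :=
      (hasDerivAt_mul_const B2).const_add A2
    have l3 : HasDerivAt (fun u : ℝ => 1 - (A1 + u * B1) - (A2 + u * B2)) (0 - B1 - B2) t :=
      ((hasDerivAt_const t (1 : ℝ)).sub l1).sub l2
    have l4 : HasDerivAt (fun u : ℝ => 1 - (A1 + u * B1)) (0 - B1) t :=
      (hasDerivAt_const t (1 : ℝ)).sub l1
    have l5 : HasDerivAt (fun u : ℝ => 1 - (A2 + u * B2)) (0 - B2) t :=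
      (hasDerivAt_const t (1 : ℝ)).sub l2
    have m1 : HasDerivAt (fun u : ℝ => (-Real.log (A1 + u * B1) - 1) * B1)
        ((-((A1 + t * B1)⁻¹ * B1)) * B1) t := by
      have := ((Real.hasDerivAt_log q1.ne').comp t l1).neg.sub_const 1
      simpa [Function.comp] using this.mul_const B1
    have m2 : HasDerivAt (fun u : ℝ => (-Real.log (A2 + u * B2) - 1) * B2)
        ((-((A2 + t * B2)⁻¹ * B2)) * B2) t := by
      have := ((Real.hasDerivAt_log q2.ne').comp t l2).neg.sub_const 1
      simpa [Function.comp] using this.mul_const B2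
    have m3 : HasDerivAt
        (fun u : ℝ => (-Real.log (1 - (A1 + u * B1) - (A2 + u * B2)) - 1) * (0 - B1 - B2))
        ((-((1 - (A1 + t * B1) - (A2 + t * B2))⁻¹ * (0 - B1 - B2))) * (0 - B1 - B2)) t := by
      have := ((Real.hasDerivAt_log q4.ne').comp t l3).neg.sub_const 1
      simpa [Function.comp] using this.mul_const (0 - B1 - B2)
    have m4 : HasDerivAt (fun u : ℝ => (-Real.log (1 - (A1 + u * B1)) - 1) * (0 - B1))
        ((-((1 - (A1 + t * B1))⁻¹ * (0 - B1))) * (0 - B1)) t := by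
      have := ((Real.hasDerivAt_log q5.ne').comp t l4).neg.sub_const 1
      simpa [Function.comp] using this.mul_const (0 - B1)
    have m5 : HasDerivAt (fun u : ℝ => (-Real.log (1 - (A2 + u * B2)) - 1) * (0 - B2))
        ((-((1 - (A2 + t * B2))⁻¹ * (0 - B2))) * (0 - B2)) t := by
      have := ((Real.hasDerivAt_log q6.ne').comp t l5).neg.sub_const 1
      simpa [Function.comp] using this.mul_const (0 - B2)
    rw [hφ'def]
    exact (((hasDerivAt_const t ((0 - B1 - B2) * Lk)).add
        (hasDerivAt_const t (B1 * L1))).add (hasDerivAt_const t (B2 * L2))).add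
      (((((m1.add m2).add (m3.const_mul 2)).sub m4).sub m5).const_mul c)
  apply strictConcaveOn_of_deriv2_neg (convex_Icc 0 1)
  · unfold phiAux
    fun_prop
  · intro t ht
    rw [interior_Icc] at ht
    obtain ⟨q1, q2, q3⟩ := hmem t (Set.Ioo_subset_Icc_self ht)
    have q4 : 0 < 1 - (A1 + t * B1) - (A2 + t * B2) := by linarith
    have q5 : 0 < 1 - (A1 + t * B1) := by linarith
    have q6 : 0 < 1 - (A2 + t * B2) := by linarith
    have hev : deriv (phiAux Lk L1 L2 c A1 B1 A2 B2) =ᶠ[nhds t] φ' := by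
      filter_upwards [Ioo_mem_nhds ht.1 ht.2] with s hs using (hder1 s hs).deriv
    show deriv (deriv (phiAux Lk L1 L2 c A1 B1 A2 B2)) t < 0
    rw [Filter.EventuallyEq.deriv_eq hev, (hder2 t ht).deriv]
    have hkey := key_ineq (A1 + t * B1) (A2 + t * B2)
      (1 - (A1 + t * B1) - (A2 + t * B2)) B1 B2 q1 q2 q4 hB
    rw [show (A2 + t * B2) + (1 - (A1 + t * B1) - (A2 + t * B2)) = 1 - (A1 + t * B1) by ring,
      show (A1 + t * B1) + (1 - (A1 + t * B1) - (A2 + t * B2)) = 1 - (A2 + t * B2) by ring]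
      at hkey
    have hinner :
        (-((A1 + t * B1)⁻¹ * B1)) * B1 + (-((A2 + t * B2)⁻¹ * B2)) * B2
            + 2 * ((-((1 - (A1 + t * B1) - (A2 + t * B2))⁻¹ * (0 - B1 - B2))) * (0 - B1 - B2))
            - (-((1 - (A1 + t * B1))⁻¹ * (0 - B1))) * (0 - B1)
            - (-((1 - (A2 + t * B2))⁻¹ * (0 - B2))) * (0 - B2)
          = (B1 ^ 2 / (1 - (A1 + t * B1)) + B2 ^ 2 / (1 - (A2 + t * B2)))
            - (B1 ^ 2 / (A1 + t * B1) + B2 ^ 2 / (A2 + t * B2)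
              + 2 * (B1 + B2) ^ 2 / (1 - (A1 + t * B1) - (A2 + t * B2))) := by
      field_simp
      ring
    rw [hinner]
    have : (B1 ^ 2 / (1 - (A1 + t * B1)) + B2 ^ 2 / (1 - (A2 + t * B2)))
        - (B1 ^ 2 / (A1 + t * B1) + B2 ^ 2 / (A2 + t * B2)
          + 2 * (B1 + B2) ^ 2 / (1 - (A1 + t * B1) - (A2 + t * B2))) < 0 := by linarith
    nlinarith [mul_neg_of_pos_of_neg hc this]


private lemma combo_pos (a b u v : ℝ) (ha : 0 ≤ a) (hb : 0 ≤ b) (hab : a + b = 1)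
    (hu : 0 < u) (hv : 0 < v) : 0 < a * u + b * v := by
  rcases eq_or_lt_of_le ha with h | h
  · have hb1 : b = 1 := by linarith
    rw [← h, hb1]
    simp only [zero_mul, one_mul, zero_add]
    exact hv
  · have h1 : 0 < a * u := mul_pos h hu
    have h2 : 0 ≤ b * v := mul_nonneg hb hv.le
    linarith

private lemma combo_lt_one (a b u v : ℝ) (ha : 0 ≤ a) (hb : 0 ≤ b) (hab : a + b = 1)
    (hu : u < 1) (hv : v < 1) : a * u + b * v < 1 := by
  rcases eq_or_lt_of_le ha with h | h
  · have hb1 : b = 1 := by linarith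
    rw [← h, hb1]
    simp only [zero_mul, one_mul, zero_add]
    exact hv
  · have h1 : a * u < a * 1 := mul_lt_mul_of_pos_left hu h
    have h2 : b * v ≤ b * 1 := mul_le_mul_of_nonneg_left hv.le hb
    nlinarith

end Aux

/-- the two-channel objective function `M` is strictly concave on
the open region `{(x₁,x₂) : x₁ > 0, x₂ > 0, x₁ + x₂ < 1}`. -/
theorem two_sets_M_strictConcave (q k p1 p2 : ℕ) (hq : 2 ≤ q)
    (hk : 1 ≤ k) (hp1 : 1 ≤ p1) (hp2 : 1 ≤ p2)
    (M : ℝ × ℝ → ℝ)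
    (hM : ∀ z : ℝ × ℝ, M z =
      (1 - z.1 - z.2) * Real.logb q k + z.1 * Real.logb q p1 + z.2 * Real.logb q p2 +
      (1 - z.2) * binH (z.1 / (1 - z.2)) * Real.logb q 2 +
      (1 - z.1) * binH (z.2 / (1 - z.1)) * Real.logb q 2) :
    StrictConcaveOn ℝ {z : ℝ × ℝ | 0 < z.1 ∧ 0 < z.2 ∧ z.1 + z.2 < 1} M := by
  have hq1 : (1 : ℝ) < (q : ℝ) := by
    have : 1 < q := by omega
    exact_mod_cast this
  have hlq : 0 < Real.log q := Real.log_pos hq1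
  have hc : 0 < (Real.log q)⁻¹ := by positivity
  have Mform : ∀ z : ℝ × ℝ, 0 < z.1 → 0 < z.2 → z.1 + z.2 < 1 →
      M z = (1 - z.1 - z.2) * Real.logb q k + z.1 * Real.logb q p1 + z.2 * Real.logb q p2 +
        (Real.log q)⁻¹ * (Real.negMulLog z.1 + Real.negMulLog z.2
          + 2 * Real.negMulLog (1 - z.1 - z.2)
          - Real.negMulLog (1 - z.1) - Real.negMulLog (1 - z.2)) := by
    intro z h1 h2 h3
    have e1 : (1 - z.2) * binH (z.1 / (1 - z.2)) * Real.logb q 2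
        = (Real.negMulLog z.1 + Real.negMulLog (1 - z.1 - z.2)
            - Real.negMulLog (1 - z.2)) / Real.log q := by
      have h := pers_binH z.1 (1 - z.2) h1 (by linarith)
      rw [show (1 : ℝ) - z.2 - z.1 = 1 - z.1 - z.2 by ring] at h
      rw [Real.logb]
      calc (1 - z.2) * binH (z.1 / (1 - z.2)) * (Real.log 2 / Real.log q)
          = ((1 - z.2) * binH (z.1 / (1 - z.2)) * Real.log 2) / Real.log q := by ring
        _ = _ := by rw [h]
    have e2 : (1 - z.1) * binH (z.2 / (1 - z.1)) * Real.logb q 2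
        = (Real.negMulLog z.2 + Real.negMulLog (1 - z.1 - z.2)
            - Real.negMulLog (1 - z.1)) / Real.log q := by
      have h := pers_binH z.2 (1 - z.1) h2 (by linarith)
      rw [Real.logb]
      calc (1 - z.1) * binH (z.2 / (1 - z.1)) * (Real.log 2 / Real.log q)
          = ((1 - z.1) * binH (z.2 / (1 - z.1)) * Real.log 2) / Real.log q := by ring
        _ = _ := by rw [h]
    rw [hM z, e1, e2]
    ring
  constructor
  · intro z hz w hw a b ha hb hab
    obtain ⟨hz1, hz2, hz3⟩ := hz
    obtain ⟨hw1, hw2, hw3⟩ := hw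
    simp only [Set.mem_setOf_eq, Prod.fst_add, Prod.snd_add, Prod.smul_fst, Prod.smul_snd,
      smul_eq_mul]
    refine ⟨combo_pos a b z.1 w.1 ha hb hab hz1 hw1,
      combo_pos a b z.2 w.2 ha hb hab hz2 hw2, ?_⟩
    have := combo_lt_one a b (z.1 + z.2) (w.1 + w.2) ha hb hab hz3 hw3
    linarith
  · intro x hx y hy hxy a b ha hb hab
    obtain ⟨hx1, hx2, hx3⟩ := hx
    obtain ⟨hy1, hy2, hy3⟩ := hy
    have hd : y.1 - x.1 ≠ 0 ∨ y.2 - x.2 ≠ 0 := by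
      by_contra hcon
      push_neg at hcon
      exact hxy (Prod.ext_iff.mpr ⟨by linarith [hcon.1], by linarith [hcon.2]⟩).symm
    have hmem : ∀ t ∈ Set.Icc (0 : ℝ) 1,
        0 < x.1 + t * (y.1 - x.1) ∧ 0 < x.2 + t * (y.2 - x.2) ∧
          (x.1 + t * (y.1 - x.1)) + (x.2 + t * (y.2 - x.2)) < 1 := by
      intro t ht
      obtain ⟨ht0, ht1⟩ := ht
      refine ⟨?_, ?_, ?_⟩
      · have := combo_pos (1 - t) t x.1 y.1 (by linarith) ht0 (by ring) hx1 hy1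
        linarith
      · have := combo_pos (1 - t) t x.2 y.2 (by linarith) ht0 (by ring) hx2 hy2
        linarith
      · have := combo_lt_one (1 - t) t (x.1 + x.2) (y.1 + y.2) (by linarith) ht0 (by ring)
          hx3 hy3
        linarith
    have hsc := phiAux_strictConcaveOn (Real.logb q k) (Real.logb q p1) (Real.logb q p2)
      (Real.log q)⁻¹ x.1 (y.1 - x.1) x.2 (y.2 - x.2) hc hd hmem
    have h0 : M x = phiAux (Real.logb q k) (Real.logb q p1) (Real.logb q p2)
        (Real.log q)⁻¹ x.1 (y.1 - x.1) x.2 (y.2 - x.2) 0 := by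
      rw [Mform x hx1 hx2 hx3]
      simp only [phiAux, zero_mul, add_zero]
    have h1 : M y = phiAux (Real.logb q k) (Real.logb q p1) (Real.logb q p2)
        (Real.log q)⁻¹ x.1 (y.1 - x.1) x.2 (y.2 - x.2) 1 := by
      rw [Mform y hy1 hy2 hy3]
      simp only [phiAux, one_mul]
      rw [show x.1 + (y.1 - x.1) = y.1 by ring, show x.2 + (y.2 - x.2) = y.2 by ring]
    have e1 : (a • x + b • y).1 = x.1 + b * (y.1 - x.1) := by
      simp only [Prod.fst_add, Prod.smul_fst, smul_eq_mul]
      linear_combination x.1 * hab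
    have e2 : (a • x + b • y).2 = x.2 + b * (y.2 - x.2) := by
      simp only [Prod.snd_add, Prod.smul_snd, smul_eq_mul]
      linear_combination x.2 * hab
    have hbIcc : b ∈ Set.Icc (0 : ℝ) 1 := ⟨hb.le, by linarith⟩
    obtain ⟨hm1, hm2, hm3⟩ := hmem b hbIcc
    have hbv : M (a • x + b • y) = phiAux (Real.logb q k) (Real.logb q p1) (Real.logb q p2)
        (Real.log q)⁻¹ x.1 (y.1 - x.1) x.2 (y.2 - x.2) b := by
      rw [Mform _ (by rw [e1]; exact hm1) (by rw [e2]; exact hm2)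
        (by rw [e1, e2]; exact hm3)]
      rw [e1, e2]
      simp only [phiAux]
    have hfin := hsc.2 (Set.left_mem_Icc.mpr zero_le_one) (Set.right_mem_Icc.mpr zero_le_one)
      (by norm_num : (0 : ℝ) ≠ 1) ha hb hab
    have heq : a • (0 : ℝ) + b • (1 : ℝ) = b := by
      simp [smul_eq_mul]
    rw [heq] at hfin
    rw [h0, h1, hbv]
    exact hfin
end

section
/- Let m ∈ (0,4) be real, and let λ_1 = (m + √(m²−4m))/2 and λ_2 = (m − √(m²−4m))/2 be the (possibly complex) roots of z² − m z + m = 0. Define r_0 = m − 1 and r_i = ((m−1) r_{i−1} − 1)/(r_{i−1} + 1) for i ≥ 1. Fix i ≥ 0 and assume λ_1^j ≠ λ_2^j for all 1 ≤ j ≤ i+1 (so that the recursion is well defined up to index i, i.e., r_{j−1} ≠ −1 for all 1 ≤ j ≤ i). Then r_i = (λ_1^{i+2} − λ_2^{i+2})/(λ_1^{i+1} − λ_2^{i+1}) − 1. -/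
private lemma recursion_step_aux (m : ℝ) (A B C : ℂ) (hA : A ≠ 0) (hB : B ≠ 0)
    (hC : C = (m : ℂ) * A - (m : ℂ) * B) :
    (((m : ℂ) - 1) * (A / B - 1) - 1) / ((A / B - 1) + 1) = C / A - 1 := by
  field_simp
  rw [sub_add_cancel, mul_div_cancel_left₀ _ hA]
  linear_combination -(B + 1) * hC + B * hC

/-- explicit solution of the continued-fraction recursion
`r_0 = m−1`, `r_i = ((m−1)r_{i−1} − 1)/(r_{i−1} + 1)`, in terms of the (possibly
complex) roots `λ₁, λ₂` of `z² − m z + m = 0`. -/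
theorem recursion_explicit_solution (m : ℝ) (hm : m ∈ Set.Ioo (0 : ℝ) 4)
    (lam1 lam2 : ℂ)
    (hlam1 : lam1 = ((m : ℂ) + ((m : ℂ) ^ 2 - 4 * (m : ℂ)) ^ ((1 : ℂ) / 2)) / 2)
    (hlam2 : lam2 = ((m : ℂ) - ((m : ℂ) ^ 2 - 4 * (m : ℂ)) ^ ((1 : ℂ) / 2)) / 2)
    (r : ℕ → ℝ) (hr0 : r 0 = m - 1)
    (hrec : ∀ j : ℕ, r (j + 1) = ((m - 1) * r j - 1) / (r j + 1))
    (i : ℕ)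
    (hroots : ∀ j : ℕ, 1 ≤ j → j ≤ i + 1 → lam1 ^ j ≠ lam2 ^ j) :
    (r i : ℂ) = (lam1 ^ (i + 2) - lam2 ^ (i + 2)) / (lam1 ^ (i + 1) - lam2 ^ (i + 1)) - 1 := by
  obtain ⟨hm0, hm4⟩ := hm
  have hz : ((m : ℂ) ^ 2 - 4 * (m : ℂ)) ≠ 0 := by
    intro h
    have h' : ((m ^ 2 - 4 * m : ℝ) : ℂ) = 0 := by push_cast; linear_combination h
    have : (m ^ 2 - 4 * m : ℝ) = 0 := by exact_mod_cast h'
    nlinarith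
  set s : ℂ := ((m : ℂ) ^ 2 - 4 * (m : ℂ)) ^ ((1 : ℂ) / 2) with hs
  have hs2 : s * s = (m : ℂ) ^ 2 - 4 * (m : ℂ) := by
    rw [hs, ← Complex.cpow_add _ _ hz]
    norm_num
  have hsum : lam1 + lam2 = (m : ℂ) := by rw [hlam1, hlam2]; ring
  have hprod : lam1 * lam2 = (m : ℂ) := by
    rw [hlam1, hlam2]
    linear_combination (-(1:ℂ)/4) * hs2
  have hkey : ∀ k : ℕ, lam1 ^ (k + 2) - lam2 ^ (k + 2) =
      (m : ℂ) * (lam1 ^ (k + 1) - lam2 ^ (k + 1)) - (m : ℂ) * (lam1 ^ k - lam2 ^ k) := by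
    intro k
    linear_combination (lam1 ^ (k + 1) - lam2 ^ (k + 1)) * hsum
      - (lam1 ^ k - lam2 ^ k) * hprod
  revert hroots
  induction i with
  | zero =>
    intro hroots
    have h1 : lam1 ^ 1 ≠ lam2 ^ 1 := hroots 1 le_rfl le_rfl
    have hne : lam1 - lam2 ≠ 0 := fun h =>
      h1 (by rw [pow_one, pow_one]; exact sub_eq_zero.mp h)
    rw [hr0]
    push_cast
    have h2 : lam1 ^ 2 - lam2 ^ 2 = (lam1 - lam2) * (m : ℂ) := by
      linear_combination (lam1 - lam2) * hsum
    rw [pow_one, pow_one, h2, mul_comm, mul_div_assoc, div_self hne, mul_one]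
  | succ n ih =>
    intro hroots
    have ihn := ih (fun j h1 h2 => hroots j h1 (by omega))
    have hB : lam1 ^ (n + 1) - lam2 ^ (n + 1) ≠ 0 :=
      sub_ne_zero.mpr (hroots (n + 1) (by omega) (by omega))
    have hA : lam1 ^ (n + 2) - lam2 ^ (n + 2) ≠ 0 :=
      sub_ne_zero.mpr (hroots (n + 2) (by omega) (by omega))
    have hc : ((r (n + 1) : ℝ) : ℂ) =
        (((m : ℂ) - 1) * (r n : ℂ) - 1) / ((r n : ℂ) + 1) := by
      rw [hrec n]; push_cast; ring
    rw [hc, ihn]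
    exact recursion_step_aux m _ _ _ hA hB (hkey (n + 1))
end

section
/- Let m ∈ (0,4) be real, set u = (m−2)/2, define r_0 = m − 1 and r_i = ((m−1) r_{i−1} − 1)/(r_{i−1} + 1) for i ≥ 1, and assume the recursion is well defined (r_{j−1} ≠ −1 for every index j used). Then for all i ≥ 1 for which the relevant denominators are nonzero: r_{2i−1} = U_i(u) / U_{i−1}(u) and r_{2i} = W_{i+1}(u) / W_i(u), where U_ℓ is the Chebyshev polynomial of the second kind and W_ℓ(x) = U_ℓ(x) + U_{ℓ−1}(x) is the Chebyshev polynomial of the fourth kind. -/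
/-- The Chebyshev polynomial of the fourth kind, `W_ℓ = U_ℓ + U_{ℓ−1}`. -/
noncomputable def chebW (ℓ : ℤ) (x : ℝ) : ℝ :=
  (Polynomial.Chebyshev.U ℝ ℓ).eval x + (Polynomial.Chebyshev.U ℝ (ℓ - 1)).eval x

/-- Auxiliary linearization of the Möbius recursion: `r j = (abAux m j).1 / (abAux m j).2`. -/
def abAux (m : ℝ) : ℕ → ℝ × ℝ
  | 0 => (m - 1, 1)
  | j + 1 => ((m - 1) * (abAux m j).1 - (abAux m j).2, (abAux m j).1 + (abAux m j).2)

lemma abAux_succ (m : ℝ) (j : ℕ) :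
    abAux m (j + 1) =
      ((m - 1) * (abAux m j).1 - (abAux m j).2, (abAux m j).1 + (abAux m j).2) := rfl

/-- the recursion `r_0 = m−1`, `r_i = ((m−1)r_{i−1} − 1)/(r_{i−1}+1)`
is expressed by ratios of Chebyshev polynomials of the second and fourth kinds at
`u = (m−2)/2`. -/
theorem recursion_chebyshev (m : ℝ) (hm : m ∈ Set.Ioo (0 : ℝ) 4)
    (u : ℝ) (hu : u = (m - 2) / 2)
    (r : ℕ → ℝ) (hr0 : r 0 = m - 1)
    (hrec : ∀ j : ℕ, r (j + 1) = ((m - 1) * r j - 1) / (r j + 1))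
    (i : ℕ) (hi : 1 ≤ i)
    (hwd : ∀ j : ℕ, j < 2 * i → r j ≠ -1)
    (hU : (Polynomial.Chebyshev.U ℝ ((i : ℤ) - 1)).eval u ≠ 0)
    (hW : chebW (i : ℤ) u ≠ 0) :
    r (2 * i - 1) = (Polynomial.Chebyshev.U ℝ (i : ℤ)).eval u /
        (Polynomial.Chebyshev.U ℝ ((i : ℤ) - 1)).eval u ∧
    r (2 * i) = chebW ((i : ℤ) + 1) u / chebW (i : ℤ) u := by
  obtain ⟨hm0, hm4⟩ := hm
  have hmne : m ≠ 0 := ne_of_gt hm0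
  have hm2 : m = 2 * u + 2 := by rw [hu]; ring
  set Ue : ℤ → ℝ := fun n => (Polynomial.Chebyshev.U ℝ n).eval u with hUe
  have hUrec : ∀ n : ℤ, Ue (n + 2) = 2 * u * Ue (n + 1) - Ue n := by
    intro n
    simp only [hUe]
    rw [Polynomial.Chebyshev.U_add_two]
    simp
  have hU0 : Ue 0 = 1 := by simp [hUe, Polynomial.Chebyshev.U_zero]
  have hU1 : Ue 1 = 2 * u := by simp [hUe, Polynomial.Chebyshev.U_one]
  have hUm1 : Ue (-1) = 0 := by simp [hUe, Polynomial.Chebyshev.U_neg_one]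
  have hWdef : ∀ n : ℤ, chebW n u = Ue n + Ue (n - 1) := fun n => rfl
  -- closed form for abAux
  have key : ∀ k : ℕ,
      abAux m (2 * k) = (m ^ k * chebW ((k : ℤ) + 1) u, m ^ k * chebW (k : ℤ) u) ∧
      abAux m (2 * k + 1) = (m ^ (k + 1) * Ue ((k : ℤ) + 1), m ^ (k + 1) * Ue (k : ℤ)) := by
    intro k
    induction k with
    | zero =>
      have c1 : chebW 1 u = m - 1 := by
        rw [hWdef]; norm_num [hU0, hU1]; linarith [hm2]
      have c0 : chebW 0 u = 1 := by
        rw [hWdef]; norm_num [hU0, hUm1]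
      constructor
      · show abAux m 0 = _
        rw [show abAux m 0 = (m - 1, 1) from rfl]
        norm_num [c1, c0]
      · show abAux m 1 = _
        rw [abAux_succ, show abAux m 0 = (m - 1, 1) from rfl]
        simp only [Nat.cast_zero, zero_add, hU1, hU0, Prod.mk.injEq]
        constructor <;> (rw [hm2]; ring)
    | succ k ih =>
      obtain ⟨ihE, ihO⟩ := ih
      have e1 : Ue ((k : ℤ) + 2) = 2 * u * Ue ((k : ℤ) + 1) - Ue (k : ℤ) := hUrec k
      have A1 : (m - 1) * (m ^ (k + 1) * Ue ((k : ℤ) + 1)) - m ^ (k + 1) * Ue (k : ℤ)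
          = m ^ (k + 1) * chebW ((k : ℤ) + 2) u := by
        rw [hWdef, show (k : ℤ) + 2 - 1 = (k : ℤ) + 1 from by ring, e1, hm2]; ring
      have A2 : m ^ (k + 1) * Ue ((k : ℤ) + 1) + m ^ (k + 1) * Ue (k : ℤ)
          = m ^ (k + 1) * chebW ((k : ℤ) + 1) u := by
        rw [hWdef, show (k : ℤ) + 1 - 1 = (k : ℤ) from by ring]; ring
      have hE : abAux m (2 * (k + 1)) =
          (m ^ (k + 1) * chebW ((k : ℤ) + 2) u, m ^ (k + 1) * chebW ((k : ℤ) + 1) u) := by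
        rw [show 2 * (k + 1) = (2 * k + 1) + 1 from by ring, abAux_succ, ihO]
        dsimp only
        rw [A1, A2]
      have B1 : (m - 1) * (m ^ (k + 1) * chebW ((k : ℤ) + 2) u)
            - m ^ (k + 1) * chebW ((k : ℤ) + 1) u
          = m ^ (k + 2) * Ue ((k : ℤ) + 2) := by
        rw [hWdef, hWdef, show (k : ℤ) + 2 - 1 = (k : ℤ) + 1 from by ring,
          show (k : ℤ) + 1 - 1 = (k : ℤ) from by ring, e1, hm2]; ring
      have B2 : m ^ (k + 1) * chebW ((k : ℤ) + 2) u + m ^ (k + 1) * chebW ((k : ℤ) + 1) u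
          = m ^ (k + 2) * Ue ((k : ℤ) + 1) := by
        rw [hWdef, hWdef, show (k : ℤ) + 2 - 1 = (k : ℤ) + 1 from by ring,
          show (k : ℤ) + 1 - 1 = (k : ℤ) from by ring, e1, hm2]; ring
      have hO : abAux m (2 * (k + 1) + 1) =
          (m ^ (k + 2) * Ue ((k : ℤ) + 2), m ^ (k + 2) * Ue ((k : ℤ) + 1)) := by
        rw [abAux_succ, hE]
        dsimp only
        rw [B1, B2]
      have hc1 : ((k + 1 : ℕ) : ℤ) + 1 = (k : ℤ) + 2 := by push_cast; ring
      have hc2 : ((k + 1 : ℕ) : ℤ) = (k : ℤ) + 1 := by push_cast; ring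
      refine ⟨?_, ?_⟩
      · rw [hE, hc1, hc2]
      · rw [hO, hc1, hc2]
  -- ratio form of r
  have hb : ∀ j : ℕ, j ≤ 2 * i → (abAux m j).2 ≠ 0 ∧ r j = (abAux m j).1 / (abAux m j).2 := by
    intro j
    induction j with
    | zero =>
      intro _
      refine ⟨by norm_num [show abAux m 0 = (m - 1, 1) from rfl], ?_⟩
      rw [hr0, show abAux m 0 = (m - 1, 1) from rfl]
      norm_num
    | succ j ih =>
      intro hj
      obtain ⟨hbne, hrj⟩ := ih (by omega)
      have hrne : r j ≠ -1 := hwd j (by omega)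
      have hab : (abAux m j).1 = r j * (abAux m j).2 := by
        rw [hrj]; field_simp
      have hb2 : (abAux m (j + 1)).2 = (r j + 1) * (abAux m j).2 := by
        rw [abAux_succ]; simp only; rw [hab]; ring
      have hb2ne : (abAux m (j + 1)).2 ≠ 0 :=
        hb2 ▸ mul_ne_zero (fun h => hrne (by linarith)) hbne
      refine ⟨hb2ne, ?_⟩
      rw [hrec j, abAux_succ]
      simp only
      rw [hab, show (m - 1) * (r j * (abAux m j).2) - (abAux m j).2
            = ((m - 1) * r j - 1) * (abAux m j).2 from by ring,
        show r j * (abAux m j).2 + (abAux m j).2 = (r j + 1) * (abAux m j).2 from by ring,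
        mul_div_mul_right _ _ hbne]
  set k := i - 1 with hkdef
  have hik : i = k + 1 := by omega
  have hkc : (k : ℤ) = (i : ℤ) - 1 := by omega
  have hmk : m ^ (k + 1) ≠ 0 := pow_ne_zero _ hmne
  have hmi : m ^ i ≠ 0 := pow_ne_zero _ hmne
  constructor
  · obtain ⟨_, hr₁⟩ := hb (2 * k + 1) (by omega)
    rw [show 2 * i - 1 = 2 * k + 1 from by omega, hr₁, (key k).2]
    simp only
    rw [mul_div_mul_left _ _ hmk, hkc]
    norm_num
    rfl
  · obtain ⟨_, hr₂⟩ := hb (2 * i) le_rfl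
    rw [hr₂, (key i).1]
    simp only
    rw [mul_div_mul_left _ _ hmi]
end

section
/- Fix an integer i ≥ 1 and let U_ℓ denote the Chebyshev polynomial of the second kind. For x ∈ (0,4) with x ≠ 1 and U_{i−1}((x−2)/2) ≠ 0, the equation U_i((x−2)/2) / U_{i−1}((x−2)/2) = 1/(x−1) holds if and only if x = 2 + 2cos( 2πk/(2i+3) ) for some integer k ∈ [1, i+1] with k ≠ (2i+3)/3 (this exclusion applying only when 3 divides i). -/
open Real

set_option maxHeartbeats 1600000

/-- solutions in `(0,4)` of `U_i((x−2)/2)/U_{i−1}((x−2)/2) = 1/(x−1)`,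
where `U_ℓ` is the Chebyshev polynomial of the second kind.  The exclusion
`3k ≠ 2i+3` is only binding when `3 ∣ i`. -/
theorem chebyshev_U_ratio_roots (i : ℕ) (hi : 1 ≤ i) (x : ℝ)
    (hx : x ∈ Set.Ioo (0 : ℝ) 4) (hx1 : x ≠ 1)
    (hU : (Polynomial.Chebyshev.U ℝ ((i : ℤ) - 1)).eval ((x - 2) / 2) ≠ 0) :
    (Polynomial.Chebyshev.U ℝ (i : ℤ)).eval ((x - 2) / 2) /
        (Polynomial.Chebyshev.U ℝ ((i : ℤ) - 1)).eval ((x - 2) / 2) = 1 / (x - 1) ↔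
      ∃ k : ℕ, 1 ≤ k ∧ k ≤ i + 1 ∧ 3 * k ≠ 2 * i + 3 ∧
        x = 2 + 2 * Real.cos (2 * Real.pi * k / (2 * i + 3)) := by
  obtain ⟨hx0, hx4⟩ := hx
  have hπ := Real.pi_pos
  obtain ⟨θ, hθ0, hθπ, hcosθ⟩ :
      ∃ θ : ℝ, 0 < θ ∧ θ < Real.pi ∧ Real.cos θ = (x - 2) / 2 := by
    have hc1 : -1 < (x - 2) / 2 := by linarith
    have hc2 : (x - 2) / 2 < 1 := by linarith
    have hcosθ : Real.cos (Real.arccos ((x - 2) / 2)) = (x - 2) / 2 :=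
      Real.cos_arccos hc1.le hc2.le
    refine ⟨Real.arccos ((x - 2) / 2), Real.arccos_pos.mpr hc2, ?_, hcosθ⟩
    refine lt_of_le_of_ne (Real.arccos_le_pi _) ?_
    intro h
    rw [h, Real.cos_pi] at hcosθ
    linarith
  set c : ℝ := (x - 2) / 2 with hc
  have hsin : 0 < Real.sin θ := Real.sin_pos_of_pos_of_lt_pi hθ0 hθπ
  have hxθ : x = 2 + 2 * Real.cos θ := by rw [hcosθ, hc]; ring
  have hEb : (Polynomial.Chebyshev.U ℝ (i : ℤ)).eval c * Real.sin θ
      = Real.sin ((i + 1) * θ) := by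
    have := Polynomial.Chebyshev.U_real_cos θ (i : ℤ)
    rw [hcosθ] at this
    rw [this]; push_cast; ring_nf
  have hEa : (Polynomial.Chebyshev.U ℝ ((i : ℤ) - 1)).eval c * Real.sin θ
      = Real.sin (i * θ) := by
    have := Polynomial.Chebyshev.U_real_cos θ ((i : ℤ) - 1)
    rw [hcosθ] at this
    rw [this]; push_cast; ring_nf
  have ha : Real.sin (i * θ) ≠ 0 := by
    rw [← hEa]
    exact mul_ne_zero hU hsin.ne'
  have hx1' : x - 1 ≠ 0 := sub_ne_zero.mpr hx1
  -- key trig identity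
  have key : Real.sin ((i + 1) * θ) * (x - 1) - Real.sin (i * θ)
      = 2 * Real.sin ((2 * i + 3) * θ / 2) * Real.cos (θ / 2) := by
    have e1 : ((i : ℝ) + 1) * θ = (2 * i + 3) * θ / 2 + (- (θ / 2)) := by ring
    have e2 : ((i : ℝ) + 2) * θ = (2 * i + 3) * θ / 2 + θ / 2 := by ring
    have e3 : ((i : ℝ)) * θ = (i + 1) * θ - θ := by ring
    have e4 : ((i : ℝ) + 2) * θ = (i + 1) * θ + θ := by ring
    have h1 : Real.sin ((i + 1) * θ) + Real.sin ((i + 2) * θ)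
        = 2 * Real.sin ((2 * i + 3) * θ / 2) * Real.cos (θ / 2) := by
      rw [e1, e2, Real.sin_add, Real.sin_add, Real.sin_neg, Real.cos_neg]; ring
    have h2 : 2 * Real.sin ((i + 1) * θ) * Real.cos θ
        = Real.sin ((i + 2) * θ) + Real.sin (i * θ) := by
      rw [e3, e4, Real.sin_add, Real.sin_sub]; ring
    have hx2 : x - 1 = 1 + 2 * Real.cos θ := by rw [hxθ]; ring
    rw [hx2]; nlinarith [h1, h2]
  have hcoshalf : 0 < Real.cos (θ / 2) :=
    Real.cos_pos_of_mem_Ioo ⟨by linarith [Real.pi_pos], by linarith⟩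
  -- the equation is equivalent to sin ((2i+3)θ/2) = 0
  have main : ((Polynomial.Chebyshev.U ℝ (i : ℤ)).eval c /
        (Polynomial.Chebyshev.U ℝ ((i : ℤ) - 1)).eval c = 1 / (x - 1))
      ↔ Real.sin ((2 * i + 3) * θ / 2) = 0 := by
    have hEa' : (Polynomial.Chebyshev.U ℝ ((i : ℤ) - 1)).eval c
        = Real.sin (i * θ) / Real.sin θ := by
      field_simp [hsin.ne'] at hEa ⊢; linarith [hEa]
    have hEb' : (Polynomial.Chebyshev.U ℝ (i : ℤ)).eval c
        = Real.sin ((i + 1) * θ) / Real.sin θ := by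
      field_simp [hsin.ne'] at hEb ⊢; linarith [hEb]
    rw [hEb', hEa']
    have hquot : Real.sin ((i + 1) * θ) / Real.sin θ / (Real.sin (i * θ) / Real.sin θ)
        = Real.sin ((i + 1) * θ) / Real.sin (i * θ) := by
      rw [div_div_div_cancel_right₀]
      exact hsin.ne'
    rw [hquot]
    rw [div_eq_div_iff ha hx1', one_mul]
    constructor
    · intro h
      have : 2 * Real.sin ((2 * i + 3) * θ / 2) * Real.cos (θ / 2) = 0 := by
        rw [← key]; linarith
      rcases mul_eq_zero.mp this with h' | h'
      · rcases mul_eq_zero.mp h' with h'' | h''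
        · norm_num at h''
        · exact h''
      · exact absurd h' hcoshalf.ne'
    · intro h
      have := key
      rw [h] at this
      nlinarith [this]
  rw [main]
  clear hU hEa hEb key main hc hcosθ ha
  clear_value c
  clear c
  constructor
  · intro h
    obtain ⟨m, hm⟩ := Real.sin_eq_zero_iff.mp h
    -- (m:ℝ) * π = (2i+3)θ/2
    have hθeq : θ = 2 * Real.pi * m / (2 * i + 3) := by
      have h23 : (0:ℝ) < 2 * i + 3 := by positivity
      field_simp at hm ⊢
      linarith [hm]
    have hm0 : (0:ℝ) < m := by
      by_contra h'
      push_neg at h'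
      have : θ ≤ 0 := by
        rw [hθeq]
        apply div_nonpos_of_nonpos_of_nonneg
        · nlinarith
        · positivity
      linarith
    have hmle : (m:ℝ) ≤ i + 1 := by
      by_contra h'
      push_neg at h'
      have hm2 : (i:ℝ) + 2 ≤ m := by exact_mod_cast (by exact_mod_cast h' : (i:ℤ) + 1 < m)
      have : Real.pi < θ := by
        rw [hθeq, lt_div_iff₀ (by positivity)]
        nlinarith
      linarith
    have hm1 : 1 ≤ m := by exact_mod_cast hm0
    refine ⟨m.toNat, ?_, ?_, ?_, ?_⟩
    · omega
    · have : (m:ℝ) ≤ (i:ℝ) + 1 := hmle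
      have : m ≤ (i:ℤ) + 1 := by exact_mod_cast this
      omega
    · intro hcon
      -- 3k = 2i+3 ⟹ θ = 2π/3 ⟹ x = 1
      have hk : (3:ℝ) * m.toNat = 2 * i + 3 := by exact_mod_cast hcon
      have hmr : (m:ℝ) = m.toNat := by
        exact_mod_cast (Int.toNat_of_nonneg (show (0:ℤ) ≤ m by omega)).symm
      have hm0' : (m:ℝ) ≠ 0 := ne_of_gt hm0
      have h3m : (2*(i:ℝ)+3) = 3*(m:ℝ) := by rw [hmr]; linarith [hk]
      have hθ23 : θ = 2 * Real.pi / 3 := by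
        rw [hθeq]
        rw [show (2:ℝ) * i + 3 = 3 * m from h3m]
        field_simp
      rw [hθ23, show 2 * Real.pi / 3 = Real.pi - Real.pi / 3 by ring,
        Real.cos_pi_sub, Real.cos_pi_div_three] at hxθ
      apply hx1
      rw [hxθ]; ring
    · rw [hxθ, hθeq]
      have hmr : (m:ℝ) = m.toNat := by
        exact_mod_cast (Int.toNat_of_nonneg (show (0:ℤ) ≤ m by omega)).symm
      rw [hmr]
  · rintro ⟨k, hk1, hk2, hk3, hkx⟩
    have h23 : (0:ℝ) < 2 * i + 3 := by positivity
    have hφpos : 0 < 2 * Real.pi * k / (2 * i + 3) := by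
      apply div_pos _ h23
      have : (1:ℝ) ≤ k := by exact_mod_cast hk1
      nlinarith
    have hφlt : 2 * Real.pi * k / (2 * i + 3) ≤ Real.pi := by
      rw [div_le_iff₀ h23]
      have hki : (k:ℝ) ≤ i + 1 := by exact_mod_cast hk2
      have h2k : 2 * (k:ℝ) ≤ 2 * i + 3 := by linarith
      nlinarith [mul_le_mul_of_nonneg_left h2k hπ.le]
    have hθeq : θ = 2 * Real.pi * k / (2 * i + 3) := by
      apply Real.injOn_cos ⟨hθ0.le, hθπ.le⟩ ⟨hφpos.le, hφlt⟩
      have := hkx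
      rw [hxθ] at this
      linarith
    rw [hθeq]
    have : (2 * (i:ℝ) + 3) * (2 * Real.pi * k / (2 * i + 3)) / 2 = k * Real.pi := by
      field_simp
    rw [this]
    exact Real.sin_nat_mul_pi k
end

section
/- Fix an integer i ≥ 1 and define W_ℓ(x) = U_ℓ(x) + U_{ℓ−1}(x), where U_ℓ is the Chebyshev polynomial of the second kind. For x ∈ (0,4) with x ≠ 1 and W_{i−1}((x−2)/2) ≠ 0, the equation W_i((x−2)/2) / W_{i−1}((x−2)/2) = 1/(x−1) holds if and only if x = 2 + 2cos( 2πk/(2i+2) ) for some integer k ∈ [1, i] with k ≠ 2(i+1)/3 (this exclusion applying only when 3 divides i+1). -/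
lemma chebW_key (n : ℤ) (θ : ℝ) :
    (chebW n (Real.cos θ) * (1 + 2 * Real.cos θ) - chebW (n - 1) (Real.cos θ)) * Real.sin θ
      = 2 * Real.sin ((n + 1) * θ) * (1 + Real.cos θ) := by
  have h1 := Polynomial.Chebyshev.U_real_cos θ n
  have h2 := Polynomial.Chebyshev.U_real_cos θ (n - 1)
  have h3 := Polynomial.Chebyshev.U_real_cos θ (n - 2)
  push_cast at h2 h3
  have e2 : Real.sin ((n - 1 + 1) * θ) = Real.sin ((n + 1) * θ - θ) := by ring_nf
  have e3 : Real.sin ((n - 2 + 1) * θ) = Real.sin ((n + 1) * θ - 2 * θ) := by ring_nf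
  rw [e2, Real.sin_sub] at h2
  rw [e3, Real.sin_sub, Real.cos_two_mul, Real.sin_two_mul] at h3
  have h : (n : ℤ) - 1 - 1 = n - 2 := by ring
  unfold chebW
  rw [h]
  linear_combination (1 + 2 * Real.cos θ) * h1 + (2 * Real.cos θ) * h2 - h3

/-- solutions in `(0,4)` of `W_i((x−2)/2)/W_{i−1}((x−2)/2) = 1/(x−1)`,
where `W_ℓ` is the Chebyshev polynomial of the fourth kind.  The exclusion
`3k ≠ 2(i+1)` is only binding when `3 ∣ (i+1)`. -/
theorem chebyshev_W_ratio_roots (i : ℕ) (hi : 1 ≤ i) (x : ℝ)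
    (hx : x ∈ Set.Ioo (0 : ℝ) 4) (hx1 : x ≠ 1)
    (hW : chebW ((i : ℤ) - 1) ((x - 2) / 2) ≠ 0) :
    chebW (i : ℤ) ((x - 2) / 2) / chebW ((i : ℤ) - 1) ((x - 2) / 2) = 1 / (x - 1) ↔
      ∃ k : ℕ, 1 ≤ k ∧ k ≤ i ∧ 3 * k ≠ 2 * (i + 1) ∧
        x = 2 + 2 * Real.cos (2 * Real.pi * k / (2 * i + 2)) := by
  obtain ⟨hx0, hx4⟩ := hx
  have pi_pos := Real.pi_pos
  set c : ℝ := (x - 2) / 2 with hc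
  have hc1 : -1 < c := by rw [hc]; linarith
  have hc2 : c < 1 := by rw [hc]; linarith
  set θ := Real.arccos c with hθdef
  have hcos : Real.cos θ = c := Real.cos_arccos hc1.le hc2.le
  have hθ0 : 0 < θ := Real.arccos_pos.2 hc2
  have hθπ : θ < Real.pi := by
    refine lt_of_le_of_ne (Real.arccos_le_pi c) (fun h => ?_)
    have : Real.cos θ = -1 := by rw [h, Real.cos_pi]
    rw [hcos] at this; linarith
  have hs : Real.sin θ ≠ 0 := (Real.sin_pos_of_pos_of_lt_pi hθ0 hθπ).ne'
  have hxθ : x = 2 + 2 * Real.cos θ := by rw [hcos, hc]; ring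
  have hxm : x - 1 = 1 + 2 * c := by rw [hc]; ring
  have hx1' : x - 1 ≠ 0 := sub_ne_zero.2 hx1
  have h1c : 0 < 1 + c := by linarith
  have key := chebW_key (i : ℤ) θ
  rw [hcos] at key
  have step1 : (chebW (i : ℤ) c / chebW ((i : ℤ) - 1) c = 1 / (x - 1)) ↔
      Real.sin (((i : ℝ) + 1) * θ) = 0 := by
    rw [div_eq_div_iff hW hx1', one_mul]
    push_cast at key
    constructor
    · intro h
      have h0 : 2 * Real.sin (((i : ℝ) + 1) * θ) * (1 + c) = 0 := by
        rw [← key, hxm] at *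
        rw [h]; ring
      rcases mul_eq_zero.1 h0 with h0 | h0
      · rcases mul_eq_zero.1 h0 with h0 | h0
        · norm_num at h0
        · exact h0
      · linarith
    · intro h
      rw [h] at key
      have : (chebW (i : ℤ) c * (1 + 2 * c) - chebW ((i : ℤ) - 1) c) = 0 := by
        rcases mul_eq_zero.1 (by linarith [key] :
          (chebW (i : ℤ) c * (1 + 2 * c) - chebW ((i : ℤ) - 1) c) * Real.sin θ = 0)
          with h' | h'
        · exact h'
        · exact absurd h' hs
      rw [hxm]; linarith
  rw [step1]
  constructor
  · intro h
    obtain ⟨n, hn⟩ := Real.sin_eq_zero_iff.1 h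
    have hn0 : 0 < n := by
      by_contra hle
      push_neg at hle
      have : (n : ℝ) * Real.pi ≤ 0 := by
        apply mul_nonpos_of_nonpos_of_nonneg _ pi_pos.le
        exact_mod_cast hle
      nlinarith [mul_pos (by positivity : (0:ℝ) < (i : ℝ) + 1) hθ0]
    have hni : n ≤ i := by
      by_contra hgt
      push_neg at hgt
      have hge : ((i : ℝ) + 1) ≤ (n : ℝ) := by exact_mod_cast hgt
      have : ((i : ℝ) + 1) * Real.pi ≤ (n : ℝ) * Real.pi :=
        mul_le_mul_of_nonneg_right hge pi_pos.le
      nlinarith [mul_lt_mul_of_pos_left hθπ (by positivity : (0:ℝ) < (i : ℝ) + 1)]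
    refine ⟨n.toNat, by omega, by omega, ?_, ?_⟩
    · intro habs
      have hθval : θ = 2 * Real.pi / 3 := by
        have hk : ((3 : ℝ) * n.toNat) = 2 * ((i : ℝ) + 1) := by exact_mod_cast habs
        have hnn : ((n.toNat : ℝ)) = (n : ℝ) := by
          exact_mod_cast Int.toNat_of_nonneg hn0.le
        rw [hnn] at hk
        have hi1 : (0:ℝ) < (i : ℝ) + 1 := by positivity
        field_simp
        nlinarith [hn]
      have hcval : Real.cos (2 * Real.pi / 3) = -(1/2) := by
        rw [show (2 * Real.pi / 3) = Real.pi - Real.pi / 3 by ring, Real.cos_pi_sub,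
          Real.cos_pi_div_three]
      rw [hθval, hcval] at hxθ
      apply hx1; rw [hxθ]; ring
    · have hnn : ((n.toNat : ℝ)) = (n : ℝ) := by
        exact_mod_cast Int.toNat_of_nonneg hn0.le
      have hθeq : θ = 2 * Real.pi * n.toNat / (2 * i + 2) := by
        rw [hnn]
        have : (2 * (i:ℝ) + 2) ≠ 0 := by positivity
        field_simp
        nlinarith [hn]
      rw [← hθeq, hxθ]
  · rintro ⟨k, hk1, hki, -, hxk⟩
    set α : ℝ := 2 * Real.pi * k / (2 * i + 2) with hα
    have hi2 : (0:ℝ) < 2 * (i:ℝ) + 2 := by positivity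
    have hα0 : 0 ≤ α := by
      apply div_nonneg _ hi2.le
      positivity
    have hαπ : α ≤ Real.pi := by
      rw [hα, div_le_iff₀ hi2]
      have : (k : ℝ) ≤ (i : ℝ) := by exact_mod_cast hki
      nlinarith
    have hcoseq : Real.cos θ = Real.cos α := by
      rw [hcos]
      rw [hxk] at hc
      rw [hc]; ring
    have hθα : θ = α :=
      Real.injOn_cos ⟨hθ0.le, hθπ.le⟩ ⟨hα0, hαπ⟩ hcoseq
    have : ((i : ℝ) + 1) * θ = k * Real.pi := by
      rw [hθα, hα]
      field_simp
    rw [this]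
    exact Real.sin_nat_mul_pi k
end
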